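/- Let K₁ and K₂ be nonempty compact convex sets in ℝⁿ, let r and m be integers with 0 ≤ r ≤ m − 2 ≤ n − 3, and let S ⊂ ℝⁿ be a linear subspace of dimension r. Then K₁ and K₂ are homothetic if and only if for every m-dimensional plane L of ℝⁿ whose direction subspace contains S (i.e., every m-dimensional plane containing a translate of S) the orthogonal projections π_L(K₁) and π_L(K₂) are homothetic (where the homothety ratio may depend on L). -/

import Mathlib

/-- Nonempty sets `X₁` and `X₂` in `ℝⁿ` are *homothetic* provided
`X₁ = z + λ • X₂` for some point `z` and some scalar `λ ≠ 0`. -/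
def Homothetic {n : ℕ} (X₁ X₂ : Set (EuclideanSpace ℝ (Fin n))) : Prop :=
  ∃ (z : EuclideanSpace ℝ (Fin n)) (l : ℝ), l ≠ 0 ∧ X₁ = (fun x => z + l • x) '' X₂

/-- The orthogonal projection of `ℝⁿ` onto the plane `p + L`. -/
noncomputable def planeProj {n : ℕ} (p : EuclideanSpace ℝ (Fin n))
    (L : Submodule ℝ (EuclideanSpace ℝ (Fin n))) (x : EuclideanSpace ℝ (Fin n)) :
    EuclideanSpace ℝ (Fin n) :=
  p + (Submodule.orthogonalProjection L (x - p) : EuclideanSpace ℝ (Fin n))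



/- ————————————————————————— Auxiliary machinery ————————————————————————— -/

open Filter Topology Module Pointwise


/-- Cauchy functional equation on an interval: continuous solutions are linear. -/
theorem cauchy_local (θ : ℝ → ℝ) (hθ : Continuous θ) (ε : ℝ) (hε : 0 < ε)
    (hadd : ∀ σ τ : ℝ, |σ| < ε → |τ| < ε → |σ + τ| < ε → θ (σ + τ) = θ σ + θ τ) :
    ∀ σ : ℝ, |σ| < ε → θ σ = (θ (ε/2) / (ε/2)) * σ := by
  have hθ0 : θ 0 = 0 := by
    have h := hadd 0 0 (by simpa using hε) (by simpa using hε) (by simpa using hε)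
    simp at h; linarith
  have hj : ∀ (j : ℕ) (σ : ℝ), |σ| < ε → |(j : ℝ) * σ| < ε → θ ((j:ℝ) * σ) = (j:ℝ) * θ σ := by
    intro j
    induction j with
    | zero => intro σ _ _; simpa using hθ0
    | succ j ih =>
      intro σ hσ hjσ
      push_cast at hjσ ⊢
      have hj' : |(j:ℝ) * σ| < ε := by
        have h1 : |(j:ℝ) * σ| ≤ |((j:ℝ)+1) * σ| := by
          rw [abs_mul, abs_mul]
          have h2 : |(j:ℝ)| ≤ |(j:ℝ)+1| := by
            rw [abs_of_nonneg (by positivity), abs_of_nonneg (by positivity)]; linarith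
          nlinarith [abs_nonneg σ, abs_nonneg ((j:ℝ))]
        linarith
      have heq : ((j:ℝ)+1) * σ = (j:ℝ) * σ + σ := by ring
      have h3 := hadd ((j:ℝ) * σ) σ hj' hσ (by rw [← heq]; exact hjσ)
      rw [heq, h3, ih σ hσ hj']
      ring
  have hk : ∀ σ : ℝ, |σ| < ε → ∀ k : ℕ, 0 < k → θ (σ / k) = θ σ / k := by
    intro σ hσ k hkpos
    have hk0 : (k:ℝ) ≠ 0 := by positivity
    have hk1 : (1:ℝ) ≤ (k:ℝ) := by exact_mod_cast hkpos
    have h1 : |σ / k| < ε := by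
      rw [abs_div, abs_of_nonneg (by positivity : (0:ℝ) ≤ (k:ℝ))]
      calc |σ| / (k:ℝ) ≤ |σ| / 1 := by
            apply div_le_div_of_nonneg_left (abs_nonneg σ) one_pos hk1
        _ < ε := by simpa using hσ
    have h2 : |(k:ℝ) * (σ / k)| < ε := by rw [mul_div_cancel₀ _ hk0]; exact hσ
    have h3 := hj k (σ / k) h1 h2
    rw [mul_div_cancel₀ _ hk0] at h3
    field_simp [h3]
    linarith [h3]
  have hprop : ∀ σ τ : ℝ, 0 < σ → σ < ε → 0 < τ → τ < ε → θ τ = (τ/σ) * θ σ := by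
    intro σ τ hσ0 hσε hτ0 hτε
    set s : ℕ → ℝ := fun k => (⌊(τ/σ) * k⌋₊ : ℝ) * (σ / k) with hs
    have hσabs : |σ| < ε := by rw [abs_of_pos hσ0]; exact hσε
    have hσk : ∀ k : ℕ, 0 < k → |σ / (k:ℝ)| < ε := by
      intro k hkpos
      have hk1 : (1:ℝ) ≤ (k:ℝ) := by exact_mod_cast hkpos
      rw [abs_of_pos (by positivity)]
      calc σ / (k:ℝ) ≤ σ / 1 := div_le_div_of_nonneg_left hσ0.le one_pos hk1
        _ < ε := by simpa using hσε
    have hsk_le : ∀ k : ℕ, 0 < k → s k ≤ τ := by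
      intro k hkpos
      have hk0 : (0:ℝ) < k := by exact_mod_cast hkpos
      have h1 : (⌊(τ/σ) * k⌋₊ : ℝ) ≤ (τ/σ) * k := Nat.floor_le (by positivity)
      rw [hs]
      calc (⌊(τ/σ) * k⌋₊ : ℝ) * (σ / k) ≤ ((τ/σ) * k) * (σ / k) :=
            mul_le_mul_of_nonneg_right h1 (by positivity)
        _ = τ := by field_simp
    have hsk_gt : ∀ k : ℕ, 0 < k → τ - σ/k < s k := by
      intro k hkpos
      have hk0 : (0:ℝ) < k := by exact_mod_cast hkpos
      have h1 : (τ/σ) * k - 1 < (⌊(τ/σ) * k⌋₊ : ℝ) := Nat.sub_one_lt_floor _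
      have h2 : ((τ/σ) * k - 1) * (σ / k) < (⌊(τ/σ) * k⌋₊ : ℝ) * (σ / k) :=
        mul_lt_mul_of_pos_right h1 (by positivity)
      rw [hs]
      calc τ - σ/k = ((τ/σ) * k - 1) * (σ / k) := by field_simp
        _ < _ := h2
    have hslim : Tendsto s atTop (𝓝 τ) := by
      have h0 : Tendsto (fun k : ℕ => σ / (k:ℝ)) atTop (𝓝 0) :=
        tendsto_const_div_atTop_nhds_zero_nat σ
      have h1 : Tendsto (fun k : ℕ => τ - σ/(k:ℝ)) atTop (𝓝 τ) := by
        have h2 : Tendsto (fun k : ℕ => τ - σ/(k:ℝ)) atTop (𝓝 (τ - 0)) :=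
          tendsto_const_nhds.sub h0
        simpa using h2
      apply tendsto_of_tendsto_of_tendsto_of_le_of_le' h1 tendsto_const_nhds
      · filter_upwards [eventually_gt_atTop 0] with k hkpos
        exact (hsk_gt k hkpos).le
      · filter_upwards [eventually_gt_atTop 0] with k hkpos
        exact hsk_le k hkpos
    have hθs : ∀ᶠ k in atTop, θ (s k) = (s k / σ) * θ σ := by
      filter_upwards [eventually_gt_atTop 0] with k hkpos
      have hk0 : (0:ℝ) < k := by exact_mod_cast hkpos
      have h1 : |σ / (k:ℝ)| < ε := hσk k hkpos
      have h2 : |(⌊(τ/σ) * k⌋₊ : ℝ) * (σ / k)| < ε := by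
        rw [abs_of_nonneg (by positivity)]
        exact lt_of_le_of_lt (hsk_le k hkpos) hτε
      have h3 := hj ⌊(τ/σ) * k⌋₊ (σ / k) h1 h2
      have h4 := hk σ hσabs k hkpos
      rw [hs]
      simp only []
      rw [h3, h4]
      field_simp
    have hlim1 : Tendsto (fun k => θ (s k)) atTop (𝓝 (θ τ)) :=
      (hθ.tendsto τ).comp hslim
    have hlim2 : Tendsto (fun k => (s k / σ) * θ σ) atTop (𝓝 ((τ / σ) * θ σ)) :=
      ((hslim.div_const σ).mul_const (θ σ))
    have hlim1' : Tendsto (fun k => θ (s k)) atTop (𝓝 ((τ / σ) * θ σ)) := by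
      apply hlim2.congr'
      filter_upwards [hθs] with k hk2
      exact hk2.symm
    exact tendsto_nhds_unique hlim1 hlim1'
  have hodd : ∀ σ : ℝ, |σ| < ε → θ (-σ) = - θ σ := by
    intro σ hσ
    have h := hadd σ (-σ) hσ (by rwa [abs_neg]) (by simpa using hε)
    simp at h
    rw [hθ0] at h
    linarith
  intro σ hσ
  have hε2 : (0:ℝ) < ε/2 := by linarith
  have hε2' : ε/2 < ε := by linarith
  rcases lt_trichotomy σ 0 with hneg | hzero | hpos
  · have h1 : 0 < -σ := by linarith
    have h2 : -σ < ε := by rw [abs_of_neg hneg] at hσ; linarith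
    have h3 := hprop (ε/2) (-σ) hε2 hε2' h1 h2
    have h4 := hodd (-σ) (by rw [abs_of_pos h1]; exact h2)
    rw [neg_neg] at h4
    rw [h3] at h4
    field_simp at h4 ⊢
    linarith
  · rw [hzero, hθ0]; ring
  · have h2 : σ < ε := by rw [abs_of_pos hpos] at hσ; exact hσ
    have h3 := hprop (ε/2) σ hε2 hε2' hpos h2
    rw [h3]; field_simp

/-- Global continuous Cauchy. -/
theorem cauchy_global (θ : ℝ → ℝ) (hθ : Continuous θ)
    (hadd : ∀ σ τ : ℝ, θ (σ + τ) = θ σ + θ τ) :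
    ∀ σ : ℝ, θ σ = θ 1 * σ := by
  intro σ
  set ε := |σ| + 2 with hε
  have hεpos : 0 < ε := by positivity
  have h := cauchy_local θ hθ ε hεpos (fun a b _ _ _ => hadd a b)
  have h1 := h σ (by rw [hε]; linarith [abs_nonneg σ])
  have h2 := h 1 (by rw [hε, abs_one]; linarith [abs_nonneg σ])
  rw [h1, h2]; ring

/-- Local Pexider equation. -/
theorem pexider_local (φ ψ χ : ℝ → ℝ) (hφ : Continuous φ) (ε : ℝ) (hε : 0 < ε)
    (H : ∀ σ τ : ℝ, |σ| < ε → |τ| < ε → χ (σ + τ) = φ σ + ψ τ) :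
    ∃ c : ℝ, ∀ σ : ℝ, |σ| < ε → φ σ = φ 0 + c * σ ∧ ψ σ = ψ 0 + c * σ := by
  have h0 : |(0:ℝ)| < ε := by simpa using hε
  set θ : ℝ → ℝ := fun σ => φ σ - φ 0 with hθdef
  have hθ : Continuous θ := hφ.sub continuous_const
  have hψθ : ∀ σ, |σ| < ε → ψ σ - ψ 0 = θ σ := by
    intro σ hσ
    have h1 := H σ 0 hσ h0
    have h2 := H 0 σ h0 hσ
    rw [add_zero] at h1
    rw [zero_add] at h2
    simp only [hθdef]
    linarith
  have hθadd : ∀ σ τ : ℝ, |σ| < ε → |τ| < ε → |σ + τ| < ε → θ (σ + τ) = θ σ + θ τ := by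
    intro σ τ hσ hτ hστ
    have h1 := H σ τ hσ hτ
    have h2 := H (σ + τ) 0 hστ h0
    rw [add_zero] at h2
    have h3 := hψθ τ hτ
    simp only [hθdef] at *
    linarith
  have hc := cauchy_local θ hθ ε hε hθadd
  refine ⟨θ (ε/2) / (ε/2), fun σ hσ => ⟨?_, ?_⟩⟩
  · have := hc σ hσ; simp only [hθdef] at this; linarith
  · have h1 := hc σ hσ
    have h2 := hψθ σ hσ
    simp only [hθdef] at h1 h2
    linarith



section Cone

variable {E : Type*} [NormedAddCommGroup E] [NormedSpace ℝ E]

/-- If `F` has an additivity defect at `(u,v)`, then `G` is linear on a cone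
around the plane spanned by `u, v` (fattened in direction `w`). -/
theorem cone_of_witness (F G : E → ℝ) (hF : Continuous F) (hG : Continuous G)
    (DH : ∀ ξ η : E, (∀ a b : ℝ, F (a•ξ + b•η) = a * F ξ + b * F η) ∨
        (∀ a b : ℝ, G (a•ξ + b•η) = a * G ξ + b * G η))
    (u v w : E) (hw : F (u + v) ≠ F u + F v) :
    ∃ ε : ℝ, 0 < ε ∧ ∃ c : ℝ, ∀ a b ρ : ℝ, |ρ| < ε * max |a| |b| →
      G (a•u + b•v + ρ•w) = a * G u + b * G v + c * ρ := by
  classical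
  set defect : ℝ × ℝ → ℝ :=
    fun p => F ((u + p.1•w) + (v + p.2•w)) - F (u + p.1•w) - F (v + p.2•w) with hdef
  have hdc : Continuous defect := by
    apply Continuous.sub
    apply Continuous.sub
    · exact hF.comp (((continuous_const.add (continuous_fst.smul continuous_const))).add
        (continuous_const.add (continuous_snd.smul continuous_const)))
    · exact hF.comp (continuous_const.add (continuous_fst.smul continuous_const))
    · exact hF.comp (continuous_const.add (continuous_snd.smul continuous_const))
  have hd0 : defect (0, 0) ≠ 0 := by
    simp only [hdef, zero_smul, add_zero]
    intro h
    apply hw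
    linarith [h]
  have hev : ∀ᶠ p in 𝓝 ((0:ℝ), (0:ℝ)), defect p ≠ 0 := hdc.continuousAt.eventually_ne hd0
  rw [Metric.eventually_nhds_iff] at hev
  obtain ⟨ε, hε, hball⟩ := hev
  have hPL : ∀ σ τ : ℝ, |σ| < ε → |τ| < ε →
      ∀ a b : ℝ, G (a•(u + σ•w) + b•(v + τ•w)) = a * G (u + σ•w) + b * G (v + τ•w) := by
    intro σ τ hσ hτ
    have hdist : dist ((σ, τ)) ((0:ℝ), (0:ℝ)) < ε := by
      rw [Prod.dist_eq]
      simp only [Real.dist_eq, sub_zero]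
      exact max_lt hσ hτ
    have hne := hball hdist
    rcases DH (u + σ•w) (v + τ•w) with h | h
    · exfalso
      apply hne
      have h11 := h 1 1
      simp only [one_smul, one_mul] at h11
      simp only [hdef]
      linarith [h11]
    · exact h
  set φ : ℝ → ℝ := fun σ => G (u + σ•w) with hφdef
  set ψ : ℝ → ℝ := fun τ => G (v + τ•w) with hψdef
  set χ : ℝ → ℝ := fun ρ => G (u + v + ρ•w) with hχdef
  have hφc : Continuous φ := hG.comp (continuous_const.add (continuous_id.smul continuous_const))
  have H : ∀ σ τ : ℝ, |σ| < ε → |τ| < ε → χ (σ + τ) = φ σ + ψ τ := by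
    intro σ τ hσ hτ
    have h1 := hPL σ τ hσ hτ 1 1
    simp only [one_smul, one_mul] at h1
    have harg : (u + σ•w) + (v + τ•w) = u + v + (σ + τ)•w := by
      rw [add_smul]; abel
    rw [harg] at h1
    exact h1
  obtain ⟨c, hc⟩ := pexider_local φ ψ χ hφc ε hε H
  have hφ0 : φ 0 = G u := by simp [hφdef]
  have hψ0 : ψ 0 = G v := by simp [hψdef]
  refine ⟨ε, hε, c, ?_⟩
  intro a b ρ hρ
  rcases le_total |b| |a| with hba | hab
  · rw [max_eq_left hba] at hρ
    have ha0 : a ≠ 0 := by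
      intro h
      rw [h] at hρ
      simp only [abs_zero, mul_zero] at hρ
      linarith [abs_nonneg ρ]
    have hσ : |ρ / a| < ε := by
      rw [abs_div, div_lt_iff₀ (abs_pos.mpr ha0)]
      linarith [hρ]
    have h1 := hPL (ρ/a) 0 hσ (by simpa using hε) a b
    have harg : a•(u + (ρ/a)•w) + b•(v + (0:ℝ)•w) = a•u + b•v + ρ•w := by
      rw [zero_smul, add_zero, smul_add, smul_smul, mul_div_cancel₀ _ ha0]
      abel
    rw [harg] at h1
    rw [h1]
    have h2 := (hc (ρ/a) hσ).1
    rw [hφ0] at h2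
    have h3 : G (u + (ρ/a)•w) = G u + c * (ρ/a) := h2
    rw [h3]
    have h4 : G (v + (0:ℝ)•w) = G v := by simp
    rw [h4]
    field_simp
    ring
  · rw [max_eq_right hab] at hρ
    have hb0 : b ≠ 0 := by
      intro h
      rw [h] at hρ
      simp only [abs_zero, mul_zero] at hρ
      linarith [abs_nonneg ρ]
    have hτ : |ρ / b| < ε := by
      rw [abs_div, div_lt_iff₀ (abs_pos.mpr hb0)]
      linarith [hρ]
    have h1 := hPL 0 (ρ/b) (by simpa using hε) hτ a b
    have harg : a•(u + (0:ℝ)•w) + b•(v + (ρ/b)•w) = a•u + b•v + ρ•w := by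
      rw [zero_smul, add_zero, smul_add, smul_smul, mul_div_cancel₀ _ hb0]
      abel
    rw [harg] at h1
    rw [h1]
    have h2 := (hc (ρ/b) hτ).2
    rw [hψ0] at h2
    have h3 : G (v + (ρ/b)•w) = G v + c * (ρ/b) := h2
    rw [h3]
    have h4 : G (u + (0:ℝ)•w) = G u := by simp
    rw [h4]
    field_simp
    ring

/-- Transfer lemma: if `F` is linear on the plane spanned by `x,y`, and that plane
meets the cone where `F` is given by a linear formula, then the formula holds on the plane. -/
theorem transfer (F : E → ℝ) (x y : E) (FP FQ cc ε : ℝ) (hε : 0 < ε)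
    (Ax Ay Bx By Rx Ry : ℝ)
    (cone : ∀ γ δ : ℝ, |γ*Rx + δ*Ry| < ε * max |γ*Ax + δ*Ay| |γ*Bx + δ*By| →
      F (γ•x + δ•y) = (γ*Ax + δ*Ay)*FP + (γ*Bx + δ*By)*FQ + cc*(γ*Rx + δ*Ry))
    (plin : ∀ γ δ : ℝ, F (γ•x + δ•y) = γ * F x + δ * F y)
    (α β : ℝ) (hR : α*Rx + β*Ry = 0)
    (hAB : 0 < max |α*Ax + β*Ay| |α*Bx + β*By|) :
    F x = Ax*FP + Bx*FQ + cc*Rx ∧ F y = Ay*FP + By*FQ + cc*Ry := by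
  obtain ⟨X, hX⟩ : ∃ X : ℝ, X = F x - (Ax*FP + Bx*FQ + cc*Rx) := ⟨_, rfl⟩
  obtain ⟨Y, hY⟩ : ∃ Y : ℝ, Y = F y - (Ay*FP + By*FQ + cc*Ry) := ⟨_, rfl⟩
  obtain ⟨K, hK⟩ : ∃ K : ℝ, K = |Ax| + |Ay| + |Bx| + |By| + |Rx| + |Ry| + 1 := ⟨_, rfl⟩
  have hKpos : 0 < K := by rw [hK]; positivity
  obtain ⟨μ, hμ⟩ : ∃ μ : ℝ, μ = max |α*Ax + β*Ay| |α*Bx + β*By| := ⟨_, rfl⟩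
  rw [← hμ] at hAB
  obtain ⟨d, hd⟩ : ∃ d : ℝ, d = min (μ/(2*K)) (ε*μ/(2*K)) := ⟨_, rfl⟩
  have hdpos : 0 < d := by
    rw [hd]
    apply lt_min
    · positivity
    · positivity
  have hzero : ∀ γ δ : ℝ, |γ - α| < d → |δ - β| < d → γ * X + δ * Y = 0 := by
    intro γ δ hγ hδ
    -- bound the R-part
    have hRbound : |γ*Rx + δ*Ry| ≤ d * (|Rx| + |Ry|) := by
      have h1 : γ*Rx + δ*Ry = (γ-α)*Rx + (δ-β)*Ry := by linear_combination hR
      rw [h1]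
      calc |(γ-α)*Rx + (δ-β)*Ry| ≤ |(γ-α)*Rx| + |(δ-β)*Ry| := abs_add_le _ _
        _ = |γ - α| * |Rx| + |δ - β| * |Ry| := by rw [abs_mul, abs_mul]
        _ ≤ d * |Rx| + d * |Ry| := by
            apply add_le_add
            · exact mul_le_mul_of_nonneg_right hγ.le (abs_nonneg _)
            · exact mul_le_mul_of_nonneg_right hδ.le (abs_nonneg _)
        _ = d * (|Rx| + |Ry|) := by ring
    -- bound the max from below
    have hmaxbound : μ - d*K ≤ max |γ*Ax + δ*Ay| |γ*Bx + δ*By| := by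
      rw [hμ]
      rcases max_cases |α*Ax + β*Ay| |α*Bx + β*By| with ⟨hmc, _⟩ | ⟨hmc, _⟩
      · have h1 : |γ*Ax + δ*Ay| ≥ |α*Ax + β*Ay| - |(γ-α)*Ax + (δ-β)*Ay| := by
          have := abs_sub_abs_le_abs_sub (α*Ax + β*Ay) ((α-γ)*Ax + (β-δ)*Ay)
          have he : α*Ax + β*Ay - ((α-γ)*Ax + (β-δ)*Ay) = γ*Ax + δ*Ay := by ring
          rw [he] at this
          have he2 : |(α-γ)*Ax + (β-δ)*Ay| = |(γ-α)*Ax + (δ-β)*Ay| := by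
            rw [← abs_neg]; ring_nf
          linarith
        have h2 : |(γ-α)*Ax + (δ-β)*Ay| ≤ d*K := by
          calc |(γ-α)*Ax + (δ-β)*Ay| ≤ |γ - α| * |Ax| + |δ - β| * |Ay| := by
                calc _ ≤ |(γ-α)*Ax| + |(δ-β)*Ay| := abs_add_le _ _
                  _ = _ := by rw [abs_mul, abs_mul]
            _ ≤ d*K := by
                rw [hK]
                nlinarith [abs_nonneg Ax, abs_nonneg Ay, abs_nonneg Bx, abs_nonneg By,
                  abs_nonneg Rx, abs_nonneg Ry, hγ.le, hδ.le, abs_nonneg (γ-α), abs_nonneg (δ-β)]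
        calc max |α*Ax + β*Ay| |α*Bx + β*By| - d*K = |α*Ax + β*Ay| - d*K := by rw [hmc]
          _ ≤ |γ*Ax + δ*Ay| := by linarith
          _ ≤ _ := le_max_left _ _
      · have h1 : |γ*Bx + δ*By| ≥ |α*Bx + β*By| - |(γ-α)*Bx + (δ-β)*By| := by
          have := abs_sub_abs_le_abs_sub (α*Bx + β*By) ((α-γ)*Bx + (β-δ)*By)
          have he : α*Bx + β*By - ((α-γ)*Bx + (β-δ)*By) = γ*Bx + δ*By := by ring
          rw [he] at this
          have he2 : |(α-γ)*Bx + (β-δ)*By| = |(γ-α)*Bx + (δ-β)*By| := by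
            rw [← abs_neg]; ring_nf
          linarith
        have h2 : |(γ-α)*Bx + (δ-β)*By| ≤ d*K := by
          calc |(γ-α)*Bx + (δ-β)*By| ≤ |γ - α| * |Bx| + |δ - β| * |By| := by
                calc _ ≤ |(γ-α)*Bx| + |(δ-β)*By| := abs_add_le _ _
                  _ = _ := by rw [abs_mul, abs_mul]
            _ ≤ d*K := by
                rw [hK]
                nlinarith [abs_nonneg Ax, abs_nonneg Ay, abs_nonneg Bx, abs_nonneg By,
                  abs_nonneg Rx, abs_nonneg Ry, hγ.le, hδ.le, abs_nonneg (γ-α), abs_nonneg (δ-β)]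
        calc max |α*Ax + β*Ay| |α*Bx + β*By| - d*K = |α*Bx + β*By| - d*K := by rw [hmc]
          _ ≤ |γ*Bx + δ*By| := by linarith
          _ ≤ _ := le_max_right _ _
    have hdK1 : d * K ≤ μ/2 := by
      have h1 : d ≤ μ/(2*K) := by rw [hd]; exact min_le_left _ _
      calc d * K ≤ (μ/(2*K)) * K := mul_le_mul_of_nonneg_right h1 hKpos.le
        _ = μ/2 := by field_simp
    have hdK2 : d * K ≤ ε*μ/2 := by
      have h1 : d ≤ ε*μ/(2*K) := by rw [hd]; exact min_le_right _ _
      calc d * K ≤ (ε*μ/(2*K)) * K := mul_le_mul_of_nonneg_right h1 hKpos.le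
        _ = ε*μ/2 := by field_simp
    have hcond : |γ*Rx + δ*Ry| < ε * max |γ*Ax + δ*Ay| |γ*Bx + δ*By| := by
      have h1 : |γ*Rx + δ*Ry| ≤ d * (|Rx| + |Ry|) := hRbound
      have h2 : d * (|Rx| + |Ry|) < d * K := by
        apply mul_lt_mul_of_pos_left _ hdpos
        rw [hK]
        nlinarith [abs_nonneg Ax, abs_nonneg Ay, abs_nonneg Bx, abs_nonneg By]
      have h3 : max |γ*Ax + δ*Ay| |γ*Bx + δ*By| ≥ μ/2 := by
        have := hmaxbound
        linarith
      calc |γ*Rx + δ*Ry| < d*K := lt_of_le_of_lt h1 h2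
        _ ≤ ε*μ/2 := hdK2
        _ ≤ ε * (μ/2) := by ring_nf; linarith [le_refl (ε*μ/2)]
        _ ≤ ε * max |γ*Ax + δ*Ay| |γ*Bx + δ*By| := by
            apply mul_le_mul_of_nonneg_left h3 hε.le
    have e1 := cone γ δ hcond
    have e2 := plin γ δ
    have e3 : γ * F x + δ * F y =
        (γ*Ax + δ*Ay)*FP + (γ*Bx + δ*By)*FQ + cc*(γ*Rx + δ*Ry) := e2.symm.trans e1
    rw [hX, hY]
    linear_combination e3
  have hcenter : α * X + β * Y = 0 := by
    apply hzero α β <;> simpa using hdpos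
  have hXzero : X = 0 := by
    have h1 := hzero (α + d/2) β (by rw [add_sub_cancel_left]; rw [abs_of_pos (by linarith)]; linarith)
      (by simpa using hdpos)
    have hh : (d/2) * X = 0 := by linarith [hcenter, h1]
    have hd2 : d/2 ≠ 0 := by positivity
    exact (mul_eq_zero.mp hh).resolve_left hd2
  have hYzero : Y = 0 := by
    have h1 := hzero α (β + d/2) (by simpa using hdpos)
      (by rw [add_sub_cancel_left]; rw [abs_of_pos (by linarith)]; linarith)
    have hh : (d/2) * Y = 0 := by linarith [hcenter, h1]
    have hd2 : d/2 ≠ 0 := by positivity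
    exact (mul_eq_zero.mp hh).resolve_left hd2
  constructor
  · rw [hX] at hXzero; linarith
  · rw [hY] at hYzero; linarith

end Cone



abbrev V3 := ℝ × ℝ × ℝ

def dot3 (a b : V3) : ℝ := a.1*b.1 + a.2.1*b.2.1 + a.2.2*b.2.2

def cr (a b : V3) : V3 :=
  (a.2.1*b.2.2 - a.2.2*b.2.1, a.2.2*b.1 - a.1*b.2.2, a.1*b.2.1 - a.2.1*b.1)

lemma comp1 (γ δ : ℝ) (x y : V3) : (γ•x + δ•y).1 = γ*x.1 + δ*y.1 := by
  simp [Prod.smul_fst, Prod.fst_add, smul_eq_mul]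

lemma comp21 (γ δ : ℝ) (x y : V3) : (γ•x + δ•y).2.1 = γ*x.2.1 + δ*y.2.1 := by
  simp [Prod.smul_snd, Prod.snd_add, Prod.smul_fst, Prod.fst_add, smul_eq_mul]

lemma comp22 (γ δ : ℝ) (x y : V3) : (γ•x + δ•y).2.2 = γ*x.2.2 + δ*y.2.2 := by
  simp [Prod.smul_snd, Prod.snd_add, smul_eq_mul]

lemma v3_zero_iff (x : V3) : x = 0 ↔ x.1 = 0 ∧ x.2.1 = 0 ∧ x.2.2 = 0 := by
  obtain ⟨x1, x2, x3⟩ := x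
  simp [Prod.ext_iff]

lemma v3_coord (x : V3) :
    x = x.1 • (((1:ℝ),(0:ℝ),(0:ℝ)) : V3) + x.2.1 • (((0:ℝ),(1:ℝ),(0:ℝ)) : V3)
      + x.2.2 • (((0:ℝ),(0:ℝ),(1:ℝ)) : V3) := by
  obtain ⟨x1, x2, x3⟩ := x
  simp [Prod.smul_mk, Prod.mk_add_mk]

lemma repr_id (P Q x : V3) : (dot3 (cr P Q) (cr P Q)) • x =
    (dot3 (cr x Q) (cr P Q)) • P + (dot3 (cr P x) (cr P Q)) • Q
      + (dot3 (cr P Q) x) • (cr P Q) := by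
  obtain ⟨p1, p2, p3⟩ := P
  obtain ⟨q1, q2, q3⟩ := Q
  obtain ⟨x1, x2, x3⟩ := x
  simp only [dot3, cr, Prod.smul_mk, Prod.mk_add_mk, smul_eq_mul, Prod.mk.injEq]
  refine ⟨by ring, by ring, by ring⟩

lemma dot3_lin (z : V3) (γ δ : ℝ) (x y : V3) :
    dot3 z (γ•x + δ•y) = γ * dot3 z x + δ * dot3 z y := by
  simp only [dot3, comp1, comp21, comp22]
  ring

lemma cr_lin_left (z : V3) (γ δ : ℝ) (x y : V3) :
    cr (γ•x + δ•y) z = γ • (cr x z) + δ • (cr y z) := by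
  obtain ⟨z1, z2, z3⟩ := z
  obtain ⟨x1, x2, x3⟩ := x
  obtain ⟨y1, y2, y3⟩ := y
  simp only [cr, Prod.smul_mk, Prod.mk_add_mk, smul_eq_mul, Prod.mk.injEq, comp1, comp21, comp22]
  refine ⟨by ring, by ring, by ring⟩

lemma cr_dep (P Q : V3) (hP : P ≠ 0) (h : cr P Q = 0) : ∃ t : ℝ, Q = t • P := by
  obtain ⟨p1, p2, p3⟩ := P
  obtain ⟨q1, q2, q3⟩ := Q
  rw [v3_zero_iff] at h
  simp only [cr] at h
  obtain ⟨c1, c2, c3⟩ := h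
  have hP' : ¬(p1 = 0 ∧ p2 = 0 ∧ p3 = 0) := by
    intro hc
    exact hP (by rw [v3_zero_iff]; exact hc)
  by_cases h1 : p1 = 0
  · by_cases h2 : p2 = 0
    · have h3 : p3 ≠ 0 := by tauto
      refine ⟨q3 / p3, ?_⟩
      simp only [Prod.smul_mk, smul_eq_mul, Prod.mk.injEq]
      refine ⟨?_, ?_, ?_⟩
      · field_simp; linear_combination c2
      · field_simp; linear_combination -c1
      · field_simp
    · refine ⟨q2 / p2, ?_⟩
      simp only [Prod.smul_mk, smul_eq_mul, Prod.mk.injEq]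
      refine ⟨?_, ?_, ?_⟩
      · field_simp; linear_combination -c3
      · field_simp
      · field_simp; linear_combination c1
  · refine ⟨q1 / p1, ?_⟩
    simp only [Prod.smul_mk, smul_eq_mul, Prod.mk.injEq]
    refine ⟨?_, ?_, ?_⟩
    · field_simp
    · field_simp; linear_combination c3
    · field_simp; linear_combination -c2

lemma dot3_self_pos (x : V3) (hx : x ≠ 0) : 0 < dot3 x x := by
  obtain ⟨x1, x2, x3⟩ := x
  have hx' : ¬(x1 = 0 ∧ x2 = 0 ∧ x3 = 0) := fun hc => hx (by rw [v3_zero_iff]; exact hc)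
  simp only [dot3]
  rcases (by tauto : x1 ≠ 0 ∨ x2 ≠ 0 ∨ x3 ≠ 0) with h | h | h <;>
  · have := h.lt_or_gt
    nlinarith [sq_nonneg x1, sq_nonneg x2, sq_nonneg x3, sq_nonneg (x1+x2+x3),
      mul_self_pos.mpr h]

lemma dot3_lin_left (z : V3) (γ δ : ℝ) (x y : V3) :
    dot3 (γ•x + δ•y) z = γ * dot3 x z + δ * dot3 y z := by
  simp only [dot3, comp1, comp21, comp22]
  ring

lemma cr_lin_right (z : V3) (γ δ : ℝ) (x y : V3) :
    cr z (γ•x + δ•y) = γ • (cr z x) + δ • (cr z y) := by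
  obtain ⟨z1, z2, z3⟩ := z
  obtain ⟨x1, x2, x3⟩ := x
  obtain ⟨y1, y2, y3⟩ := y
  simp only [cr, Prod.smul_mk, Prod.mk_add_mk, smul_eq_mul, Prod.mk.injEq, comp1, comp21, comp22]
  refine ⟨by ring, by ring, by ring⟩

noncomputable def RfD (P Q ξ : V3) : ℝ := dot3 (cr P Q) ξ / dot3 (cr P Q) (cr P Q)

noncomputable def AfD (P Q ξ : V3) : ℝ :=
  dot3 (cr (ξ - RfD P Q ξ • cr P Q) Q) (cr P Q) / dot3 (cr P Q) (cr P Q)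

noncomputable def BfD (P Q ξ : V3) : ℝ :=
  dot3 (cr P (ξ - RfD P Q ξ • cr P Q)) (cr P Q) / dot3 (cr P Q) (cr P Q)

lemma sub_comb (γ δ r s : ℝ) (x y ν : V3) :
    (γ•x + δ•y) - (γ*r + δ*s)•ν = γ•(x - r•ν) + δ•(y - s•ν) := by
  rw [add_smul, smul_sub, smul_sub, smul_smul, smul_smul]
  abel

lemma RfD_lin (P Q : V3) (γ δ : ℝ) (x y : V3) :
    RfD P Q (γ•x + δ•y) = γ * RfD P Q x + δ * RfD P Q y := by
  simp only [RfD]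
  rw [dot3_lin]
  ring

lemma AfD_lin (P Q : V3) (γ δ : ℝ) (x y : V3) :
    AfD P Q (γ•x + δ•y) = γ * AfD P Q x + δ * AfD P Q y := by
  simp only [AfD]
  rw [RfD_lin, sub_comb, cr_lin_left, dot3_lin_left]
  ring

lemma BfD_lin (P Q : V3) (γ δ : ℝ) (x y : V3) :
    BfD P Q (γ•x + δ•y) = γ * BfD P Q x + δ * BfD P Q y := by
  simp only [BfD]
  rw [RfD_lin, sub_comb, cr_lin_right, dot3_lin_left]
  ring

lemma REPR (P Q : V3) (h : dot3 (cr P Q) (cr P Q) ≠ 0) (ξ : V3) :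
    ξ = AfD P Q ξ • P + BfD P Q ξ • Q + RfD P Q ξ • cr P Q := by
  have hsub : ξ - RfD P Q ξ • cr P Q = (1:ℝ)•ξ + (-(RfD P Q ξ))•cr P Q := by
    rw [one_smul, neg_smul, ← sub_eq_add_neg]
  have hdot : dot3 (cr P Q) (ξ - RfD P Q ξ • cr P Q) = 0 := by
    rw [hsub, dot3_lin]
    simp only [RfD]
    field_simp
    ring
  have hid := repr_id P Q (ξ - RfD P Q ξ • cr P Q)
  rw [hdot, zero_smul, add_zero] at hid
  have h3 := congrArg (fun z => (dot3 (cr P Q) (cr P Q))⁻¹ • z) hid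
  simp only [smul_add, smul_smul, inv_mul_cancel₀ h, one_smul] at h3
  have hAf : AfD P Q ξ • P = ((dot3 (cr P Q) (cr P Q))⁻¹
      * dot3 (cr (ξ - RfD P Q ξ • cr P Q) Q) (cr P Q)) • P := by
    simp only [AfD, div_eq_inv_mul]
  have hBf : BfD P Q ξ • Q = ((dot3 (cr P Q) (cr P Q))⁻¹
      * dot3 (cr P (ξ - RfD P Q ξ • cr P Q)) (cr P Q)) • Q := by
    simp only [BfD, div_eq_inv_mul]
  calc ξ = (ξ - RfD P Q ξ • cr P Q) + RfD P Q ξ • cr P Q := by abel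
    _ = _ := by rw [h3, hAf, hBf]

theorem T3 (F G : V3 → ℝ) (hF : Continuous F) (hG : Continuous G)
    (homF : ∀ (r : ℝ) (ξ : V3), F (r • ξ) = r * F ξ)
    (homG : ∀ (r : ℝ) (ξ : V3), G (r • ξ) = r * G ξ)
    (DH : ∀ ξ η : V3, (∀ a b : ℝ, F (a•ξ + b•η) = a * F ξ + b * F η) ∨
        (∀ a b : ℝ, G (a•ξ + b•η) = a * G ξ + b * G η))
    (hFw : F ((((1:ℝ),(0:ℝ),(0:ℝ)) : V3) + (((0:ℝ),(1:ℝ),(0:ℝ)) : V3)) ≠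
      F (((1:ℝ),(0:ℝ),(0:ℝ)) : V3) + F (((0:ℝ),(1:ℝ),(0:ℝ)) : V3))
    (P Q : V3) (hGw : G (P + Q) ≠ G P + G Q) : False := by
  classical
  have hG0 : G 0 = 0 := by have := homG 0 0; simpa using this
  have hF0 : F 0 = 0 := by have := homF 0 0; simpa using this
  have hP0 : P ≠ 0 := by
    rintro rfl
    apply hGw
    rw [zero_add, hG0, zero_add]
  have hPQdep : ∀ t : ℝ, Q ≠ t • P := by
    rintro t rfl
    apply hGw
    have h1 : P + t • P = (1 + t) • P := by rw [add_smul, one_smul]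
    rw [h1, homG, homG]; ring
  obtain ⟨ε₁, hε₁, c₁, CONEg⟩ := cone_of_witness F G hF hG DH
    (((1:ℝ),(0:ℝ),(0:ℝ)) : V3) (((0:ℝ),(1:ℝ),(0:ℝ)) : V3) (((0:ℝ),(0:ℝ),(1:ℝ)) : V3) hFw
  have CONEg' : ∀ ξ : V3, |ξ.2.2| < ε₁ * max |ξ.1| |ξ.2.1| →
      G ξ = ξ.1 * G (((1:ℝ),(0:ℝ),(0:ℝ)) : V3) + ξ.2.1 * G (((0:ℝ),(1:ℝ),(0:ℝ)) : V3)
        + c₁ * ξ.2.2 := by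
    intro ξ h
    have h2 := CONEg ξ.1 ξ.2.1 ξ.2.2 h
    rwa [← v3_coord ξ] at h2
  have hν0 : cr P Q ≠ 0 := by
    intro h
    obtain ⟨t, ht⟩ := cr_dep P Q hP0 h
    exact hPQdep t ht
  obtain ⟨ε₂, hε₂, c₂, CONEf⟩ := cone_of_witness G F hG hF
    (fun ξ η => (DH ξ η).symm) P Q (cr P Q) hGw
  have hNN0 : dot3 (cr P Q) (cr P Q) ≠ 0 := ne_of_gt (dot3_self_pos _ hν0)
  have CONEf' : ∀ ξ : V3, |RfD P Q ξ| < ε₂ * max |AfD P Q ξ| |BfD P Q ξ| →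
      F ξ = AfD P Q ξ * F P + BfD P Q ξ * F Q + c₂ * RfD P Q ξ := by
    intro ξ h
    have h2 := CONEf (AfD P Q ξ) (BfD P Q ξ) (RfD P Q ξ) h
    rwa [← REPR P Q hNN0 ξ] at h2
  have hzero_iff : ∀ ξ : V3, AfD P Q ξ = 0 → BfD P Q ξ = 0 → RfD P Q ξ = 0 → ξ = 0 := by
    intro ξ h1 h2 h3
    have h4 := REPR P Q hNN0 ξ
    rw [h1, h2, h3] at h4
    simpa using h4
  -- transfer for G
  have LYG : ∀ x y : V3, x ≠ 0 → (∀ t : ℝ, y ≠ t • x) →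
      (∀ a b : ℝ, G (a•x + b•y) = a * G x + b * G y) →
      (G x = x.1 * G (((1:ℝ),(0:ℝ),(0:ℝ)) : V3) + x.2.1 * G (((0:ℝ),(1:ℝ),(0:ℝ)) : V3)
          + c₁ * x.2.2) ∧
      (G y = y.1 * G (((1:ℝ),(0:ℝ),(0:ℝ)) : V3) + y.2.1 * G (((0:ℝ),(1:ℝ),(0:ℝ)) : V3)
          + c₁ * y.2.2) := by
    intro x y hx0 hdep hplin
    have hy0 : y ≠ 0 := fun h => hdep 0 (by rw [h, zero_smul])
    by_cases h3 : x.2.2 = 0 ∧ y.2.2 = 0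
    · constructor
      · apply CONEg'
        rw [h3.1]
        have hne : ¬(x.1 = 0 ∧ x.2.1 = 0) := by
          rintro ⟨ha, hb⟩
          exact hx0 (by rw [v3_zero_iff]; exact ⟨ha, hb, h3.1⟩)
        have hmax : 0 < max |x.1| |x.2.1| := by
          rcases (by tauto : x.1 ≠ 0 ∨ x.2.1 ≠ 0) with h | h
          · exact lt_max_iff.mpr (Or.inl (abs_pos.mpr h))
          · exact lt_max_iff.mpr (Or.inr (abs_pos.mpr h))
        simpa using mul_pos hε₁ hmax
      · apply CONEg'
        rw [h3.2]
        have hne : ¬(y.1 = 0 ∧ y.2.1 = 0) := by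
          rintro ⟨ha, hb⟩
          exact hy0 (by rw [v3_zero_iff]; exact ⟨ha, hb, h3.2⟩)
        have hmax : 0 < max |y.1| |y.2.1| := by
          rcases (by tauto : y.1 ≠ 0 ∨ y.2.1 ≠ 0) with h | h
          · exact lt_max_iff.mpr (Or.inl (abs_pos.mpr h))
          · exact lt_max_iff.mpr (Or.inr (abs_pos.mpr h))
        simpa using mul_pos hε₁ hmax
    · have hR : y.2.2 * x.2.2 + (-x.2.2) * y.2.2 = 0 := by ring
      have hAB : 0 < max |y.2.2*x.1 + (-x.2.2)*y.1| |y.2.2*x.2.1 + (-x.2.2)*y.2.1| := by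
        by_contra hc
        push_neg at hc
        have hA : y.2.2*x.1 + (-x.2.2)*y.1 = 0 :=
          abs_eq_zero.mp (le_antisymm ((le_max_left _ _).trans hc) (abs_nonneg _))
        have hB : y.2.2*x.2.1 + (-x.2.2)*y.2.1 = 0 :=
          abs_eq_zero.mp (le_antisymm ((le_max_right _ _).trans hc) (abs_nonneg _))
        by_cases hx3 : x.2.2 = 0
        · have hy3 : y.2.2 ≠ 0 := fun h => h3 ⟨hx3, h⟩
          apply hx0
          rw [v3_zero_iff]
          refine ⟨?_, ?_, hx3⟩
          · have h5 : y.2.2 * x.1 = 0 := by rw [hx3] at hA; linarith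
            exact (mul_eq_zero.mp h5).resolve_left hy3
          · have h5 : y.2.2 * x.2.1 = 0 := by rw [hx3] at hB; linarith
            exact (mul_eq_zero.mp h5).resolve_left hy3
        · apply hdep (y.2.2 / x.2.2)
          have e1 : y.1 = y.2.2 / x.2.2 * x.1 := by field_simp; linear_combination -hA
          have e2 : y.2.1 = y.2.2 / x.2.2 * x.2.1 := by field_simp; linear_combination -hB
          have e3 : y.2.2 = y.2.2 / x.2.2 * x.2.2 := by field_simp
          refine Prod.ext ?_ (Prod.ext ?_ ?_)
          · rw [Prod.smul_fst, smul_eq_mul]; exact e1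
          · rw [Prod.smul_snd, Prod.smul_fst, smul_eq_mul]; exact e2
          · rw [Prod.smul_snd, Prod.smul_snd, smul_eq_mul]; exact e3
      refine transfer G x y _ _ c₁ ε₁ hε₁ x.1 y.1 x.2.1 y.2.1 x.2.2 y.2.2 ?_ hplin
        y.2.2 (-x.2.2) hR hAB
      intro γ δ h
      have h2 := CONEg' (γ•x + δ•y) (by rwa [comp1, comp21, comp22])
      rwa [comp1, comp21, comp22] at h2
  -- transfer for F
  have LYF : ∀ x y : V3, x ≠ 0 → (∀ t : ℝ, y ≠ t • x) →
      (∀ a b : ℝ, F (a•x + b•y) = a * F x + b * F y) →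
      (F x = AfD P Q x * F P + BfD P Q x * F Q + c₂ * RfD P Q x) ∧
      (F y = AfD P Q y * F P + BfD P Q y * F Q + c₂ * RfD P Q y) := by
    intro x y hx0 hdep hplin
    have hy0 : y ≠ 0 := fun h => hdep 0 (by rw [h, zero_smul])
    by_cases h3 : RfD P Q x = 0 ∧ RfD P Q y = 0
    · constructor
      · apply CONEf'
        rw [h3.1]
        have hne : ¬(AfD P Q x = 0 ∧ BfD P Q x = 0) := by
          rintro ⟨ha, hb⟩
          exact hx0 (hzero_iff x ha hb h3.1)
        have hmax : 0 < max |AfD P Q x| |BfD P Q x| := by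
          rcases (by tauto : AfD P Q x ≠ 0 ∨ BfD P Q x ≠ 0) with h | h
          · exact lt_max_iff.mpr (Or.inl (abs_pos.mpr h))
          · exact lt_max_iff.mpr (Or.inr (abs_pos.mpr h))
        simpa using mul_pos hε₂ hmax
      · apply CONEf'
        rw [h3.2]
        have hne : ¬(AfD P Q y = 0 ∧ BfD P Q y = 0) := by
          rintro ⟨ha, hb⟩
          exact hy0 (hzero_iff y ha hb h3.2)
        have hmax : 0 < max |AfD P Q y| |BfD P Q y| := by
          rcases (by tauto : AfD P Q y ≠ 0 ∨ BfD P Q y ≠ 0) with h | h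
          · exact lt_max_iff.mpr (Or.inl (abs_pos.mpr h))
          · exact lt_max_iff.mpr (Or.inr (abs_pos.mpr h))
        simpa using mul_pos hε₂ hmax
    · have hR : RfD P Q y * RfD P Q x + (-(RfD P Q x)) * RfD P Q y = 0 := by ring
      have hAB : 0 < max |RfD P Q y * AfD P Q x + (-(RfD P Q x)) * AfD P Q y|
          |RfD P Q y * BfD P Q x + (-(RfD P Q x)) * BfD P Q y| := by
        by_contra hc
        push_neg at hc
        have hA : RfD P Q y * AfD P Q x + (-(RfD P Q x)) * AfD P Q y = 0 :=
          abs_eq_zero.mp (le_antisymm ((le_max_left _ _).trans hc) (abs_nonneg _))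
        have hB : RfD P Q y * BfD P Q x + (-(RfD P Q x)) * BfD P Q y = 0 :=
          abs_eq_zero.mp (le_antisymm ((le_max_right _ _).trans hc) (abs_nonneg _))
        have hξ0 : RfD P Q y • x + (-(RfD P Q x)) • y = 0 := by
          apply hzero_iff
          · rw [AfD_lin]; linarith [hA]
          · rw [BfD_lin]; linarith [hB]
          · rw [RfD_lin]; ring
        by_cases hβ0 : RfD P Q x = 0
        · have hα0 : RfD P Q y ≠ 0 := fun h => h3 ⟨hβ0, h⟩
          rw [hβ0, neg_zero, zero_smul, add_zero] at hξ0
          exact hx0 ((smul_eq_zero.mp hξ0).resolve_left hα0)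
        · apply hdep (RfD P Q y / RfD P Q x)
          have h5 : (-(RfD P Q x)) • y = -(RfD P Q y • x) := eq_neg_of_add_eq_zero_right hξ0
          have h6 : RfD P Q x • y = RfD P Q y • x := by
            have h6' := congrArg Neg.neg h5
            rwa [neg_smul, neg_neg, neg_neg] at h6'
          have h7 := congrArg (fun z => (RfD P Q x)⁻¹ • z) h6
          simp only [smul_smul, inv_mul_cancel₀ hβ0, one_smul] at h7
          rw [div_eq_inv_mul]
          exact h7
      refine transfer F x y _ _ c₂ ε₂ hε₂ (AfD P Q x) (AfD P Q y) (BfD P Q x) (BfD P Q y)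
        (RfD P Q x) (RfD P Q y) ?_ hplin (RfD P Q y) (-(RfD P Q x)) hR hAB
      intro γ δ h
      have h2 := CONEf' (γ•x + δ•y)
        (by rwa [AfD_lin, BfD_lin, RfD_lin])
      rwa [AfD_lin, BfD_lin, RfD_lin] at h2
  -- endgame
  by_cases hall : ∀ ξ : V3, G ξ = ξ.1 * G (((1:ℝ),(0:ℝ),(0:ℝ)) : V3)
      + ξ.2.1 * G (((0:ℝ),(1:ℝ),(0:ℝ)) : V3) + c₁ * ξ.2.2
  · apply hGw
    rw [hall (P+Q), hall P, hall Q]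
    simp only [Prod.fst_add, Prod.snd_add]
    ring
  · push_neg at hall
    obtain ⟨x₀, hx₀⟩ := hall
    have hx₀0 : x₀ ≠ 0 := by
      rintro rfl
      apply hx₀
      simp [hG0]
    have PF : ∀ y : V3, (∀ t : ℝ, y ≠ t • x₀) →
        ∀ a b : ℝ, F (a•x₀ + b•y) = a * F x₀ + b * F y := by
      intro y hy
      rcases DH x₀ y with h | h
      · exact h
      · exact absurd ((LYG x₀ y hx₀0 hy h).1) hx₀
    have hFx₀ : F x₀ = AfD P Q x₀ * F P + BfD P Q x₀ * F Q + c₂ * RfD P Q x₀ := by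
      have hy' : (∀ t : ℝ, P ≠ t • x₀) ∨ (∀ t : ℝ, Q ≠ t • x₀) := by
        by_contra hc
        push_neg at hc
        obtain ⟨⟨s, hs⟩, ⟨s', hs'⟩⟩ := hc
        by_cases hs0 : s = 0
        · exact hP0 (by rw [hs, hs0, zero_smul])
        · apply hPQdep (s'/s)
          rw [hs, hs', smul_smul, div_mul_cancel₀ _ hs0]
      rcases hy' with hy | hy
      · exact (LYF x₀ P hx₀0 hy (PF P hy)).1
      · exact (LYF x₀ Q hx₀0 hy (PF Q hy)).1
    have hFall : ∀ y : V3, F y = AfD P Q y * F P + BfD P Q y * F Q + c₂ * RfD P Q y := by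
      intro y
      by_cases hy : ∀ t : ℝ, y ≠ t • x₀
      · exact (LYF x₀ y hx₀0 hy (PF y hy)).2
      · push_neg at hy
        obtain ⟨t, rfl⟩ := hy
        rw [homF, hFx₀]
        have hsm : t • x₀ = t•x₀ + (0:ℝ)•x₀ := by rw [zero_smul, add_zero]
        have hA : AfD P Q (t•x₀) = t * AfD P Q x₀ := by
          rw [hsm, AfD_lin]; ring
        have hB : BfD P Q (t•x₀) = t * BfD P Q x₀ := by
          rw [hsm, BfD_lin]; ring
        have hRr : RfD P Q (t•x₀) = t * RfD P Q x₀ := by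
          rw [hsm, RfD_lin]; ring
        rw [hA, hB, hRr]
        ring
    apply hFw
    rw [hFall ((((1:ℝ),(0:ℝ),(0:ℝ)) : V3) + (((0:ℝ),(1:ℝ),(0:ℝ)) : V3)),
      hFall (((1:ℝ),(0:ℝ),(0:ℝ)) : V3), hFall (((0:ℝ),(1:ℝ),(0:ℝ)) : V3)]
    have hone : ((((1:ℝ),(0:ℝ),(0:ℝ)) : V3) + (((0:ℝ),(1:ℝ),(0:ℝ)) : V3))
        = (1:ℝ)•(((1:ℝ),(0:ℝ),(0:ℝ)) : V3) + (1:ℝ)•(((0:ℝ),(1:ℝ),(0:ℝ)) : V3) := by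
      simp
    have hA := AfD_lin P Q 1 1 (((1:ℝ),(0:ℝ),(0:ℝ)) : V3) (((0:ℝ),(1:ℝ),(0:ℝ)) : V3)
    have hB := BfD_lin P Q 1 1 (((1:ℝ),(0:ℝ),(0:ℝ)) : V3) (((0:ℝ),(1:ℝ),(0:ℝ)) : V3)
    have hRr := RfD_lin P Q 1 1 (((1:ℝ),(0:ℝ),(0:ℝ)) : V3) (((0:ℝ),(1:ℝ),(0:ℝ)) : V3)
    rw [← hone] at hA hB hRr
    rw [hA, hB, hRr]
    ring




variable {E : Type*} [NormedAddCommGroup E] [NormedSpace ℝ E]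

theorem dichotomy_global (f g : E → ℝ) (hf : Continuous f) (hg : Continuous g)
    (homf : ∀ (r : ℝ) (x : E), f (r•x) = r * f x)
    (homg : ∀ (r : ℝ) (x : E), g (r•x) = r * g x)
    (DH : ∀ x y : E, (∀ a b : ℝ, f (a•x + b•y) = a * f x + b * f y) ∨
        (∀ a b : ℝ, g (a•x + b•y) = a * g x + b * g y)) :
    (∀ x y : E, f (x + y) = f x + f y) ∨ (∀ x y : E, g (x + y) = g x + g y) := by
  classical
  by_contra hcon
  push_neg at hcon
  obtain ⟨⟨u, v, hfw⟩, ⟨c, d, hgw⟩⟩ := hcon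
  -- Step 1: from T3, g is additive on every subspace span{u, v, x}.
  have QG : ∀ x p q : E, (∃ a b e : ℝ, p = a•u + b•v + e•x) →
      (∃ a b e : ℝ, q = a•u + b•v + e•x) → g (p + q) = g p + g q := by
    rintro x p q ⟨p1, p2, p3, rfl⟩ ⟨q1, q2, q3, rfl⟩
    by_contra hne
    set combo : V3 → E := fun ξ => ξ.1•u + ξ.2.1•v + ξ.2.2•x with hcombo
    have hcomboC : Continuous combo := by
      apply Continuous.add
      apply Continuous.add
      · exact (continuous_fst).smul continuous_const
      · exact (continuous_snd.fst).smul continuous_const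
      · exact (continuous_snd.snd).smul continuous_const
    have hcombo_lin : ∀ (a b : ℝ) (ξ η : V3),
        combo (a•ξ + b•η) = a • combo ξ + b • combo η := by
      intro a b ξ η
      simp only [hcombo, comp1, comp21, comp22, add_smul, mul_smul, smul_add]
      abel
    have hcombo_smul : ∀ (r : ℝ) (ξ : V3), combo (r • ξ) = r • combo ξ := by
      intro r ξ
      simp only [hcombo, Prod.smul_fst, Prod.smul_snd, smul_eq_mul, mul_smul, smul_add]
    have hFw' : f (combo ((((1:ℝ),(0:ℝ),(0:ℝ)) : V3) + (((0:ℝ),(1:ℝ),(0:ℝ)) : V3))) ≠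
        f (combo (((1:ℝ),(0:ℝ),(0:ℝ)) : V3)) + f (combo (((0:ℝ),(1:ℝ),(0:ℝ)) : V3)) := by
      have h1 : combo ((((1:ℝ),(0:ℝ),(0:ℝ)) : V3) + (((0:ℝ),(1:ℝ),(0:ℝ)) : V3)) = u + v := by
        simp [hcombo, Prod.mk_add_mk]
      have h2 : combo (((1:ℝ),(0:ℝ),(0:ℝ)) : V3) = u := by simp [hcombo]
      have h3 : combo (((0:ℝ),(1:ℝ),(0:ℝ)) : V3) = v := by simp [hcombo]
      simpa only [h1, h2, h3] using hfw
    have hGw' : g (combo (((p1, p2, p3) : V3) + ((q1, q2, q3) : V3))) ≠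
        g (combo ((p1, p2, p3) : V3)) + g (combo ((q1, q2, q3) : V3)) := by
      have h1 : combo (((p1, p2, p3) : V3) + ((q1, q2, q3) : V3))
          = (p1•u + p2•v + p3•x) + (q1•u + q2•v + q3•x) := by
        simp only [hcombo, Prod.mk_add_mk, add_smul]
        abel
      have h2 : combo ((p1, p2, p3) : V3) = p1•u + p2•v + p3•x := rfl
      have h3 : combo ((q1, q2, q3) : V3) = q1•u + q2•v + q3•x := rfl
      simpa only [h1, h2, h3] using hne
    exact T3 (fun ξ => f (combo ξ)) (fun ξ => g (combo ξ))
      (hf.comp hcomboC) (hg.comp hcomboC)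
      (fun r ξ => by
        show f (combo (r • ξ)) = r * f (combo ξ)
        rw [hcombo_smul, homf])
      (fun r ξ => by
        show g (combo (r • ξ)) = r * g (combo ξ)
        rw [hcombo_smul, homg])
      (fun ξ η => by
        rcases DH (combo ξ) (combo η) with h | h
        · exact Or.inl (fun a b => by
            show f (combo (a•ξ + b•η)) = a * f (combo ξ) + b * f (combo η)
            rw [hcombo_lin]; exact h a b)
        · exact Or.inr (fun a b => by
            show g (combo (a•ξ + b•η)) = a * g (combo ξ) + b * g (combo η)
            rw [hcombo_lin]; exact h a b))
      hFw' ((p1, p2, p3) : V3) ((q1, q2, q3) : V3) hGw'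
  -- Step 2: the plane span{c+m, d+m'} (m, m' in span{u,v}) is "positive" for f.
  have hPos : ∀ s t s' t' a b : ℝ,
      f (a•(c + s•u + t•v) + b•(d + s'•u + t'•v))
        = a * f (c + s•u + t•v) + b * f (d + s'•u + t'•v) := by
    intro s t s' t'
    rcases DH (c + s•u + t•v) (d + s'•u + t'•v) with h | h
    · exact h
    · exfalso
      have h11 := h 1 1
      simp only [one_smul, one_mul] at h11
      -- compute both sides with QG to find δg(c+m, d+m') = δg(c,d) ≠ 0
      have e0 : (c + s•u + t•v) + (d + s'•u + t'•v) = (c + d) + ((s+s')•u + (t+t')•v) := by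
        simp only [add_smul]; abel
      have e1 : g ((c + d) + ((s+s')•u + (t+t')•v)) = g (c + d) + g ((s+s')•u + (t+t')•v) := by
        apply QG (c + d)
        · exact ⟨0, 0, 1, by simp⟩
        · exact ⟨s+s', t+t', 0, by simp⟩
      have e2 : g ((s+s')•u + (t+t')•v) = g (s•u + t•v) + g (s'•u + t'•v) := by
        have := QG u (s•u + t•v) (s'•u + t'•v) ⟨s, t, 0, by simp⟩ ⟨s', t', 0, by simp⟩
        rw [← this]
        congr 1
        simp only [add_smul]; abel
      have e3 : g (c + s•u + t•v) = g c + g (s•u + t•v) := by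
        have := QG c c (s•u + t•v) ⟨0, 0, 1, by simp⟩ ⟨s, t, 0, by simp⟩
        rw [← this]
        congr 1
        abel
      have e4 : g (d + s'•u + t'•v) = g d + g (s'•u + t'•v) := by
        have := QG d d (s'•u + t'•v) ⟨0, 0, 1, by simp⟩ ⟨s', t', 0, by simp⟩
        rw [← this]
        congr 1
        abel
      apply hgw
      rw [e0, e1, e2] at h11
      rw [e3, e4] at h11
      linarith
  -- Step 3: global 2D Pexider on the plane span{u,v}
  have E1 : ∀ s t s' t' : ℝ, f (c + d + (s+s')•u + (t+t')•v)
      = f (c + s•u + t•v) + f (d + s'•u + t'•v) := by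
    intro s t s' t'
    have h := hPos s t s' t' 1 1
    simp only [one_smul, one_mul] at h
    rw [← h]
    congr 1
    simp only [add_smul]; abel
  set Φ : ℝ → ℝ → ℝ := fun s t => f (c + s•u + t•v) with hΦ
  set Ψ : ℝ → ℝ → ℝ := fun s t => f (d + s•u + t•v) with hΨ
  set θ : ℝ → ℝ → ℝ := fun s t => Φ s t - Φ 0 0 with hθ
  have hΨθ : ∀ s t : ℝ, Ψ s t = Ψ 0 0 + θ s t := by
    intro s t
    have h1 := E1 s t 0 0
    have h2 := E1 0 0 s t
    simp only [add_zero, zero_add] at h1 h2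
    simp only [hθ]
    linarith
  have hθadd : ∀ s t s' t' : ℝ, θ (s+s') (t+t') = θ s t + θ s' t' := by
    intro s t s' t'
    have h1 := E1 s t s' t'
    have h2 := E1 (s+s') (t+t') 0 0
    simp only [add_zero] at h2
    have h3 := hΨθ s' t'
    have h4 := hΨθ 0 0
    simp only [hθ]
    simp only [hθ] at h3
    linarith
  have hθcont1 : Continuous (fun s => θ s 0) := by
    apply Continuous.sub _ continuous_const
    exact hf.comp ((continuous_const.add (continuous_id.smul continuous_const)).add
      continuous_const)
  have hθcont2 : Continuous (fun t => θ 0 t) := by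
    apply Continuous.sub _ continuous_const
    exact hf.comp (continuous_const.add (continuous_id.smul continuous_const))
  have hθ1 : ∀ s : ℝ, θ s 0 = θ 1 0 * s := by
    apply cauchy_global _ hθcont1
    intro s s'
    have := hθadd s 0 s' 0
    simpa using this
  have hθ2 : ∀ t : ℝ, θ 0 t = θ 0 1 * t := by
    apply cauchy_global _ hθcont2
    intro t t'
    have := hθadd 0 t 0 t'
    simpa using this
  have hθst : ∀ s t : ℝ, θ s t = θ 1 0 * s + θ 0 1 * t := by
    intro s t
    have h1 := hθadd s 0 0 t
    simp only [add_zero, zero_add] at h1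
    rw [h1, hθ1, hθ2]
  have hΦall : ∀ s t : ℝ, f (c + s•u + t•v) = f c + θ 1 0 * s + θ 0 1 * t := by
    intro s t
    have h1 : Φ s t = Φ 0 0 + θ s t := by simp only [hθ]; ring
    have h2 : Φ 0 0 = f c := by simp only [hΦ, zero_smul, add_zero]
    have h3 := hθst s t
    have h4 : f (c + s•u + t•v) = Φ s t := rfl
    rw [h4, h1, h2, h3]
    ring
  -- Step 4: formula away from the plane
  have hForm : ∀ a s t : ℝ, a ≠ 0 → f (a•c + s•u + t•v) = a * f c + θ 1 0 * s + θ 0 1 * t := by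
    intro a s t ha
    have h1 := hPos (s/a) (t/a) 0 0 a 0
    simp only [zero_smul, add_zero, zero_mul] at h1
    have harg : a•(c + (s/a)•u + (t/a)•v) = a•c + s•u + t•v := by
      rw [smul_add, smul_add, smul_smul, smul_smul, mul_div_cancel₀ _ ha, mul_div_cancel₀ _ ha]
    rw [harg] at h1
    rw [h1, hΦall (s/a) (t/a)]
    field_simp
  -- Step 5: pass to the limit a → 0
  have hLim : ∀ s t : ℝ, f (s•u + t•v) = θ 1 0 * s + θ 0 1 * t := by
    intro s t
    have hcont : Tendsto (fun a : ℝ => f (a•c + s•u + t•v)) (𝓝 0)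
        (𝓝 (f ((0:ℝ)•c + s•u + t•v))) := by
      apply (hf.tendsto _).comp
      apply Tendsto.add
      apply Tendsto.add
      · exact (continuous_id.smul continuous_const).tendsto 0
      · exact tendsto_const_nhds
      · exact tendsto_const_nhds
    rw [zero_smul, zero_add] at hcont
    have hcont2 : Tendsto (fun a : ℝ => a * f c + (θ 1 0 * s + θ 0 1 * t)) (𝓝 0)
        (𝓝 ((0:ℝ) * f c + (θ 1 0 * s + θ 0 1 * t))) := by
      apply Tendsto.add _ tendsto_const_nhds
      exact (continuous_id.mul continuous_const).tendsto 0
    rw [zero_mul, zero_add] at hcont2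
    have hev : (fun a : ℝ => f (a•c + s•u + t•v)) =ᶠ[𝓝[≠] (0:ℝ)]
        (fun a : ℝ => a * f c + (θ 1 0 * s + θ 0 1 * t)) := by
      filter_upwards [self_mem_nhdsWithin] with a ha
      rw [hForm a s t ha]
      ring
    have h1 : Tendsto (fun a : ℝ => f (a•c + s•u + t•v)) (𝓝[≠] (0:ℝ))
        (𝓝 (f (s•u + t•v))) := hcont.mono_left nhdsWithin_le_nhds
    have h2 : Tendsto (fun a : ℝ => f (a•c + s•u + t•v)) (𝓝[≠] (0:ℝ))
        (𝓝 (θ 1 0 * s + θ 0 1 * t)) := by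
      apply Tendsto.congr' hev.symm
      exact hcont2.mono_left nhdsWithin_le_nhds
    exact tendsto_nhds_unique h1 h2
  -- Conclusion: f is additive at (u, v), contradiction.
  apply hfw
  have h1 := hLim 1 1
  have h2 := hLim 1 0
  have h3 := hLim 0 1
  simp only [one_smul, zero_smul, add_zero, zero_add] at h1 h2 h3
  rw [h1, h2, h3]
  ring



noncomputable section

variable {n : ℕ}

local notation "E" => EuclideanSpace ℝ (Fin n)

/-- Support function of a set. -/
def sf (K : Set (EuclideanSpace ℝ (Fin n))) (x : EuclideanSpace ℝ (Fin n)) : ℝ :=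
  sSup ((fun y => @inner ℝ _ _ y x) '' K)

lemma sf_isGreatest {K : Set (EuclideanSpace ℝ (Fin n))} (hK : IsCompact K) (hne : K.Nonempty)
    (x : E) : IsGreatest ((fun y => @inner ℝ _ _ y x) '' K) (sf K x) := by
  have hcont : Continuous (fun y : E => (@inner ℝ _ _ y x : ℝ)) :=
    continuous_id.inner continuous_const
  have himc : IsCompact ((fun y => (@inner ℝ _ _ y x : ℝ)) '' K) := hK.image hcont
  have himne : ((fun y => (@inner ℝ _ _ y x : ℝ)) '' K).Nonempty := hne.image _
  exact ⟨himc.sSup_mem himne, (himc.isLUB_sSup himne).1⟩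

lemma sf_le {K : Set (EuclideanSpace ℝ (Fin n))} (hK : IsCompact K) (hne : K.Nonempty)
    {y : E} (hy : y ∈ K) (x : E) : (@inner ℝ _ _ y x : ℝ) ≤ sf K x :=
  (sf_isGreatest hK hne x).2 ⟨y, hy, rfl⟩

lemma sf_exists {K : Set (EuclideanSpace ℝ (Fin n))} (hK : IsCompact K) (hne : K.Nonempty)
    (x : E) : ∃ y ∈ K, sf K x = (@inner ℝ _ _ y x : ℝ) := by
  obtain ⟨y, hy, he⟩ := (sf_isGreatest hK hne x).1
  exact ⟨y, hy, he.symm⟩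

lemma sf_image_pos {K : Set (EuclideanSpace ℝ (Fin n))} (hK : IsCompact K) (hne : K.Nonempty)
    (z : E) {l : ℝ} (hl : 0 ≤ l) (x : E) :
    sf ((fun y => z + l • y) '' K) x = (@inner ℝ _ _ z x : ℝ) + l * sf K x := by
  apply IsGreatest.csSup_eq
  rw [Set.image_image]
  obtain ⟨y₀, hy₀, hmax⟩ := sf_exists hK hne x
  constructor
  · exact ⟨y₀, hy₀, by simp only [inner_add_left, real_inner_smul_left]; rw [hmax]⟩
  · rintro _ ⟨y, hy, rfl⟩
    simp only [inner_add_left, real_inner_smul_left]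
    have := sf_le hK hne hy x
    nlinarith [mul_le_mul_of_nonneg_left this hl]

lemma sf_image_neg {K : Set (EuclideanSpace ℝ (Fin n))} (hK : IsCompact K) (hne : K.Nonempty)
    (z : E) {l : ℝ} (hl : l ≤ 0) (x : E) :
    sf ((fun y => z + l • y) '' K) x = (@inner ℝ _ _ z x : ℝ) + (-l) * sf K (-x) := by
  apply IsGreatest.csSup_eq
  rw [Set.image_image]
  obtain ⟨y₀, hy₀, hmax⟩ := sf_exists hK hne (-x)
  constructor
  · refine ⟨y₀, hy₀, ?_⟩
    simp only [inner_add_left, real_inner_smul_left]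
    rw [hmax, inner_neg_right]
    ring
  · rintro _ ⟨y, hy, rfl⟩
    simp only [inner_add_left, real_inner_smul_left]
    have h1 := sf_le hK hne hy (-x)
    rw [inner_neg_right] at h1
    nlinarith [mul_le_mul_of_nonneg_left h1 (by linarith : (0:ℝ) ≤ -l)]

lemma sf_proj {K : Set (EuclideanSpace ℝ (Fin n))} (L : Submodule ℝ (EuclideanSpace ℝ (Fin n)))
    (x : E) :
    sf ((fun y => ((Submodule.orthogonalProjection L y : E))) '' K) x
      = sf K ((Submodule.orthogonalProjection L x : E)) := by
  unfold sf
  rw [Set.image_image]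
  congr 1
  apply Set.image_congr
  intro y _
  exact Submodule.inner_starProjection_left_eq_right L y x

lemma sf_subadd {K : Set (EuclideanSpace ℝ (Fin n))} (hK : IsCompact K) (hne : K.Nonempty)
    (x y : E) : sf K (x + y) ≤ sf K x + sf K y := by
  obtain ⟨y₀, hy₀, hmax⟩ := sf_exists hK hne (x + y)
  rw [hmax, inner_add_right]
  have h1 := sf_le hK hne hy₀ x
  have h2 := sf_le hK hne hy₀ y
  linarith

lemma sf_zero_dir {K : Set (EuclideanSpace ℝ (Fin n))} (hK : IsCompact K) (hne : K.Nonempty) :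
    sf K 0 = 0 := by
  obtain ⟨y₀, _, hmax⟩ := sf_exists hK hne 0
  rw [hmax, inner_zero_right]

lemma sf_smul {K : Set (EuclideanSpace ℝ (Fin n))} (hK : IsCompact K) (hne : K.Nonempty)
    {c : ℝ} (hc : 0 ≤ c) (x : E) : sf K (c • x) = c * sf K x := by
  rcases eq_or_lt_of_le hc with hc0 | hcpos
  · rw [← hc0, zero_smul, sf_zero_dir hK hne, zero_mul]
  · apply IsGreatest.csSup_eq
    obtain ⟨y₀, hy₀, hmax⟩ := sf_exists hK hne x
    constructor
    · exact ⟨y₀, hy₀, by simp only [real_inner_smul_right]; rw [hmax]⟩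
    · rintro _ ⟨y, hy, rfl⟩
      simp only [real_inner_smul_right]
      exact mul_le_mul_of_nonneg_left (sf_le hK hne hy x) hc

lemma sf_cont {K : Set (EuclideanSpace ℝ (Fin n))} (hK : IsCompact K) (hne : K.Nonempty) :
    Continuous (sf K) := by
  obtain ⟨r, hr⟩ := hK.isBounded.subset_closedBall 0
  have hr0 : 0 ≤ max r 0 := le_max_right _ _
  have hr' : K ⊆ Metric.closedBall 0 (max r 0) :=
    hr.trans (Metric.closedBall_subset_closedBall (le_max_left _ _))
  have key : ∀ x y : E, sf K x - sf K y ≤ max r 0 * ‖x - y‖ := by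
    intro x y
    obtain ⟨y₀, hy₀, hmax⟩ := sf_exists hK hne x
    have h1 : (@inner ℝ _ _ y₀ x : ℝ) = @inner ℝ _ _ y₀ y + @inner ℝ _ _ y₀ (x - y) := by
      rw [← inner_add_right]
      congr 1
      abel
    have h2 : (@inner ℝ _ _ y₀ (x - y) : ℝ) ≤ ‖y₀‖ * ‖x - y‖ := real_inner_le_norm _ _
    have h3 : ‖y₀‖ ≤ max r 0 := by
      have := hr' hy₀
      rwa [Metric.mem_closedBall, dist_zero_right] at this
    have h4 := sf_le hK hne hy₀ y
    have h5 : ‖y₀‖ * ‖x - y‖ ≤ max r 0 * ‖x - y‖ :=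
      mul_le_mul_of_nonneg_right h3 (norm_nonneg _)
    rw [hmax, h1]
    linarith
  have hlip : LipschitzWith (max r 0).toNNReal (sf K) := by
    apply LipschitzWith.of_dist_le_mul
    intro x y
    rw [Real.dist_eq, Real.coe_toNNReal _ hr0, dist_eq_norm]
    rw [abs_sub_le_iff]
    constructor
    · exact key x y
    · have := key y x
      rwa [norm_sub_rev] at this
  exact hlip.continuous

lemma sf_subset {A B : Set (EuclideanSpace ℝ (Fin n))}
    (hA : IsCompact A) (hAne : A.Nonempty)
    (hB : IsCompact B) (hBc : Convex ℝ B) (hBne : B.Nonempty)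
    (h : ∀ x, sf A x ≤ sf B x) : A ⊆ B := by
  intro a ha
  by_contra hnb
  obtain ⟨φ, w, hlt, hgt⟩ := geometric_hahn_banach_closed_point hBc hB.isClosed hnb
  set y := (InnerProductSpace.toDual ℝ (EuclideanSpace ℝ (Fin n))).symm φ with hy
  have hφ : ∀ v : E, φ v = (@inner ℝ _ _ v y : ℝ) := by
    intro v
    rw [real_inner_comm]
    exact (InnerProductSpace.toDual_symm_apply).symm
  have h1 : sf B y < w := by
    obtain ⟨b₀, hb₀, hmax⟩ := sf_exists hB hBne y
    rw [hmax, ← hφ b₀]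
    exact hlt b₀ hb₀
  have h2 : w < sf A y := by
    have h3 := sf_le hA hAne ha y
    rw [← hφ a] at h3
    linarith
  have := h y
  linarith

lemma sf_set_eq {A B : Set (EuclideanSpace ℝ (Fin n))}
    (hA : IsCompact A) (hAc : Convex ℝ A) (hAne : A.Nonempty)
    (hB : IsCompact B) (hBc : Convex ℝ B) (hBne : B.Nonempty)
    (h : ∀ x, sf A x = sf B x) : A = B := by
  apply Set.Subset.antisymm
  · exact sf_subset hA hAne hB hBc hBne (fun x => (h x).le)
  · exact sf_subset hB hBne hA hAc hAne (fun x => (h x).ge)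

lemma sf_width_nonneg {K : Set (EuclideanSpace ℝ (Fin n))} (hK : IsCompact K) (hne : K.Nonempty)
    (x : E) : 0 ≤ sf K x + sf K (-x) := by
  obtain ⟨y, hy⟩ := hne
  have h1 := sf_le hK ⟨y, hy⟩ hy x
  have h2 := sf_le hK ⟨y, hy⟩ hy (-x)
  rw [inner_neg_right] at h2
  linarith

lemma singleton_of_width_zero {K : Set (EuclideanSpace ℝ (Fin n))}
    (hK : IsCompact K) {a : E} (ha : a ∈ K)
    (h : ∀ x, sf K x + sf K (-x) = 0) : K = {a} := by
  have hKne : K.Nonempty := ⟨a, ha⟩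
  ext b
  simp only [Set.mem_singleton_iff]
  constructor
  · intro hb
    have h1 := sf_le hK hKne hb (b - a)
    have h2 := sf_le hK hKne ha (-(b - a))
    rw [inner_neg_right] at h2
    have h3 := h (b - a)
    have h4 : (@inner ℝ _ _ (b - a) (b - a) : ℝ) ≤ 0 := by
      rw [inner_sub_left]
      linarith
    have h5 := real_inner_self_nonpos.mp h4
    have h6 : b - a = 0 := h5
    rw [sub_eq_zero] at h6
    exact h6
  · rintro rfl
    exact ha

/-- Riesz representation of a sublinear function with zero widths on a subspace. -/
lemma riesz_on (h : EuclideanSpace ℝ (Fin n) → ℝ)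
    (hsub : ∀ x y, h (x + y) ≤ h x + h y)
    (hhom : ∀ c : ℝ, 0 ≤ c → ∀ x, h (c • x) = c * h x)
    (L : Submodule ℝ (EuclideanSpace ℝ (Fin n)))
    (hw : ∀ x ∈ L, h x + h (-x) = 0) :
    ∃ z : E, ∀ x ∈ L, h x = (@inner ℝ _ _ z x : ℝ) := by
  have hadd : ∀ x ∈ L, ∀ y ∈ L, h (x + y) = h x + h y := by
    intro x hx y hy
    refine le_antisymm (hsub x y) ?_
    have h1 := hsub (x + y) (-y)
    rw [add_neg_cancel_right] at h1
    have h2 := hw y hy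
    linarith
  have hsmul' : ∀ c : ℝ, ∀ x ∈ L, h (c • x) = c * h x := by
    intro c x hx
    rcases le_or_gt 0 c with hc | hc
    · exact hhom c hc x
    · have h1 : c • x = (-c) • (-x) := by rw [smul_neg, neg_smul, neg_neg]
      have h2 := hw x hx
      rw [h1, hhom (-c) (by linarith) (-x)]
      have h3 : h (-x) = - h x := by linarith
      rw [h3]
      ring
  let φ : EuclideanSpace ℝ (Fin n) →ₗ[ℝ] ℝ :=
    { toFun := fun x => h ((Submodule.orthogonalProjection L x : E))
      map_add' := by
        intro x y
        show h ((Submodule.orthogonalProjection L (x + y) : E)) = _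
        have h1 : ((Submodule.orthogonalProjection L (x + y) : E))
            = (Submodule.orthogonalProjection L x : E) + (Submodule.orthogonalProjection L y : E) := by
          rw [map_add]
          rfl
        rw [h1]
        exact hadd _ (SetLike.coe_mem _) _ (SetLike.coe_mem _)
      map_smul' := by
        intro c x
        show h ((Submodule.orthogonalProjection L (c • x) : E)) = _
        have h1 : ((Submodule.orthogonalProjection L (c • x) : E)) = c • (Submodule.orthogonalProjection L x : E) := by
          rw [map_smul]
          rfl
        rw [h1]
        simp only [RingHom.id_apply, smul_eq_mul]
        exact hsmul' c _ (SetLike.coe_mem _) }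
  set z := (InnerProductSpace.toDual ℝ (EuclideanSpace ℝ (Fin n))).symm
    (LinearMap.toContinuousLinearMap φ) with hz
  refine ⟨z, fun x hx => ?_⟩
  have h1 : (@inner ℝ _ _ z x : ℝ) = φ x := InnerProductSpace.toDual_symm_apply
  rw [h1]
  show h x = h ((Submodule.orthogonalProjection L x : E))
  rw [show ((Submodule.orthogonalProjection L x : E)) = x from Submodule.starProjection_eq_self_iff.mpr hx]

/-- Any subspace of dimension at most `m ≤ n` extends to one of dimension exactly `m`. -/
lemma ext_subspace (m : ℕ) (hm : m ≤ n) :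
    ∀ T : Submodule ℝ (EuclideanSpace ℝ (Fin n)), finrank ℝ T ≤ m →
      ∃ L, T ≤ L ∧ finrank ℝ L = m := by
  have haux : ∀ k : ℕ, ∀ T : Submodule ℝ (EuclideanSpace ℝ (Fin n)), finrank ℝ T ≤ m →
      m - finrank ℝ T = k → ∃ L, T ≤ L ∧ finrank ℝ L = m := by
    intro k
    induction k with
    | zero =>
      intro T hle h0
      exact ⟨T, le_refl _, by omega⟩
    | succ k ih =>
      intro T hle hk
      have hlt : finrank ℝ T < m := by omega
      have hTne : T ≠ ⊤ := by
        intro hT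
        rw [hT, finrank_top, finrank_euclideanSpace_fin] at hlt
        omega
      obtain ⟨x, hx⟩ : ∃ x : E, x ∉ T := by
        by_contra hc
        push_neg at hc
        exact hTne (Submodule.eq_top_iff'.mpr hc)
      have hx0 : x ≠ 0 := fun h => hx (h ▸ T.zero_mem)
      have hinf : T ⊓ Submodule.span ℝ {x} = ⊥ := by
        rw [Submodule.eq_bot_iff]
        intro y hy
        rw [Submodule.mem_inf, Submodule.mem_span_singleton] at hy
        obtain ⟨hyT, c, rfl⟩ := hy
        rcases eq_or_ne c 0 with rfl | hc
        · rw [zero_smul]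
        · exfalso
          apply hx
          have := T.smul_mem c⁻¹ hyT
          rwa [smul_smul, inv_mul_cancel₀ hc, one_smul] at this
      have hdim : finrank ℝ ↥(T ⊔ Submodule.span ℝ {x}) = finrank ℝ T + 1 := by
        have := Submodule.finrank_sup_add_finrank_inf_eq T (Submodule.span ℝ {x})
        rw [hinf, finrank_span_singleton hx0] at this
        simpa using this
      obtain ⟨L, hL1, hL2⟩ := ih (T ⊔ Submodule.span ℝ {x}) (by omega) (by omega)
      exact ⟨L, le_sup_left.trans hL1, hL2⟩
  intro T hle
  exact haux (m - finrank ℝ T) T hle rfl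


set_option maxHeartbeats 1000000 in
/-- Compact convex sets `K₁` and `K₂` in `ℝⁿ` are homothetic if and only if, for fixed
`r ≤ m - 2 ≤ n - 3` and a fixed `r`-dimensional subspace `S`, their orthogonal
projections on every `m`-dimensional plane of `ℝⁿ` whose direction contains `S`
are homothetic. -/
theorem homothetic_iff_projections_through_subspace_homothetic_compact
    (n m r : ℕ) (hrm : r + 2 ≤ m) (hmn : m + 1 ≤ n)
    (S : Submodule ℝ (EuclideanSpace ℝ (Fin n))) (hS : Module.finrank ℝ S = r)
    (K₁ K₂ : Set (EuclideanSpace ℝ (Fin n)))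
    (hne₁ : K₁.Nonempty) (hne₂ : K₂.Nonempty)
    (hc₁ : IsCompact K₁) (hc₂ : IsCompact K₂)
    (hcv₁ : Convex ℝ K₁) (hcv₂ : Convex ℝ K₂) :
    Homothetic K₁ K₂ ↔
      ∀ (p : EuclideanSpace ℝ (Fin n)) (L : Submodule ℝ (EuclideanSpace ℝ (Fin n))),
        Module.finrank ℝ L = m → S ≤ L →
        Homothetic (planeProj p L '' K₁) (planeProj p L '' K₂) := by
  constructor
  · -- forward direction
    rintro ⟨z, l, hl, hK⟩ p L hL hSL
    refine ⟨(Submodule.orthogonalProjection L z : EuclideanSpace ℝ (Fin n))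
      + (1 - l) • (p - (Submodule.orthogonalProjection L p : EuclideanSpace ℝ (Fin n))), l, hl, ?_⟩
    rw [hK, Set.image_image, Set.image_image]
    apply Set.image_congr
    intro x _
    show planeProj p L (z + l • x) = _ + l • planeProj p L x
    unfold planeProj
    have h1 : ((Submodule.orthogonalProjection L (z + l • x - p) : EuclideanSpace ℝ (Fin n)))
        = (Submodule.orthogonalProjection L z : EuclideanSpace ℝ (Fin n))
          + l • (Submodule.orthogonalProjection L x : EuclideanSpace ℝ (Fin n))
          - (Submodule.orthogonalProjection L p : EuclideanSpace ℝ (Fin n)) := by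
      rw [map_sub, map_add, map_smul]
      simp
    have h2 : ((Submodule.orthogonalProjection L (x - p) : EuclideanSpace ℝ (Fin n)))
        = (Submodule.orthogonalProjection L x : EuclideanSpace ℝ (Fin n))
          - (Submodule.orthogonalProjection L p : EuclideanSpace ℝ (Fin n)) := by
      rw [map_sub]
      simp
    rw [h1, h2]
    module
  · -- backward direction
    intro hyp
    classical
    -- Step A: signed support relation on each admissible subspace
    have key : ∀ L : Submodule ℝ (EuclideanSpace ℝ (Fin n)), finrank ℝ L = m → S ≤ L →
        ∃ lam : ℝ, 0 < lam ∧ ∃ z : EuclideanSpace ℝ (Fin n),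
          (∀ x ∈ L, sf K₁ x = (@inner ℝ _ _ z x : ℝ) + lam * sf K₂ x) ∨
          (∀ x ∈ L, sf K₁ x = (@inner ℝ _ _ z x : ℝ) + lam * sf K₂ (-x)) := by
      intro L hL hSL
      obtain ⟨z, l, hl, heq⟩ := hyp 0 L hL hSL
      have hproj : ∀ X : Set (EuclideanSpace ℝ (Fin n)), planeProj 0 L '' X =
          (fun y => ((Submodule.orthogonalProjection L y : EuclideanSpace ℝ (Fin n)))) '' X := by
        intro X
        apply Set.image_congr
        intro y _
        simp [planeProj]
      rw [hproj, hproj] at heq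
      have hPcont : Continuous (fun y : EuclideanSpace ℝ (Fin n) =>
          ((Submodule.orthogonalProjection L y : EuclideanSpace ℝ (Fin n)))) :=
        continuous_subtype_val.comp (Submodule.orthogonalProjection L).continuous
      have h2c : IsCompact ((fun y => ((Submodule.orthogonalProjection L y : EuclideanSpace ℝ (Fin n))))
          '' K₂) := hc₂.image hPcont
      have h2ne : ((fun y => ((Submodule.orthogonalProjection L y : EuclideanSpace ℝ (Fin n))))
          '' K₂).Nonempty := hne₂.image _
      have hsfx : ∀ x : EuclideanSpace ℝ (Fin n),
          sf K₁ ((Submodule.orthogonalProjection L x : EuclideanSpace ℝ (Fin n)))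
            = sf ((fun y => z + l • y) ''
              ((fun y => ((Submodule.orthogonalProjection L y : EuclideanSpace ℝ (Fin n)))) '' K₂)) x := by
        intro x
        rw [← sf_proj L x, heq]
      rcases lt_or_gt_of_ne hl with hneg | hpos
      · refine ⟨-l, by linarith, z, Or.inr ?_⟩
        intro x hx
        have e := hsfx x
        rw [sf_image_neg h2c h2ne z hneg.le, sf_proj L (-x)] at e
        rw [show ((Submodule.orthogonalProjection L x : EuclideanSpace ℝ (Fin n))) = x from Submodule.starProjection_eq_self_iff.mpr hx] at e
        rw [show ((Submodule.orthogonalProjection L (-x) : EuclideanSpace ℝ (Fin n))) = -x from Submodule.starProjection_eq_self_iff.mpr (L.neg_mem hx)] at e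
        exact e
      · refine ⟨l, hpos, z, Or.inl ?_⟩
        intro x hx
        have e := hsfx x
        rw [sf_image_pos h2c h2ne z hpos.le, sf_proj L x] at e
        rw [show ((Submodule.orthogonalProjection L x : EuclideanSpace ℝ (Fin n))) = x from Submodule.starProjection_eq_self_iff.mpr hx] at e
        exact e
    -- widths
    have keyW : ∀ L : Submodule ℝ (EuclideanSpace ℝ (Fin n)), finrank ℝ L = m → S ≤ L →
        ∃ lam : ℝ, 0 < lam ∧ ∀ x ∈ L,
          sf K₁ x + sf K₁ (-x) = lam * (sf K₂ x + sf K₂ (-x)) := by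
      intro L hL hSL
      obtain ⟨lam, hlam, z, hrel⟩ := key L hL hSL
      refine ⟨lam, hlam, ?_⟩
      intro x hx
      rcases hrel with h | h
      · have h1 := h x hx
        have h2 := h (-x) (L.neg_mem hx)
        rw [inner_neg_right] at h2
        linarith
      · have h1 := h x hx
        have h2 := h (-x) (L.neg_mem hx)
        rw [inner_neg_right, neg_neg] at h2
        linarith
    -- every pair of points lies in an admissible subspace
    have hsing : ∀ w : EuclideanSpace ℝ (Fin n), finrank ℝ (Submodule.span ℝ {w}) ≤ 1 := by
      intro w
      rcases eq_or_ne w 0 with rfl | hw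
      · rw [Submodule.span_zero_singleton]
        simp
      · rw [finrank_span_singleton hw]
    have pair_plane : ∀ x y : EuclideanSpace ℝ (Fin n),
        ∃ L : Submodule ℝ (EuclideanSpace ℝ (Fin n)),
          finrank ℝ L = m ∧ S ≤ L ∧ x ∈ L ∧ y ∈ L := by
      intro x y
      have hT : finrank ℝ ↥((S ⊔ Submodule.span ℝ {x}) ⊔ Submodule.span ℝ {y}) ≤ m := by
        have h1 := Submodule.finrank_sup_add_finrank_inf_eq S (Submodule.span ℝ {x})
        have h2 := Submodule.finrank_sup_add_finrank_inf_eq (S ⊔ Submodule.span ℝ {x})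
          (Submodule.span ℝ {y})
        have h3 := hsing x
        have h4 := hsing y
        rw [hS] at h1
        omega
      obtain ⟨L, hTL, hLm⟩ := ext_subspace m (by omega) _ hT
      refine ⟨L, hLm, ?_, ?_, ?_⟩
      · exact (le_sup_left.trans le_sup_left).trans hTL
      · exact hTL (Submodule.mem_sup_left
          (Submodule.mem_sup_right (Submodule.mem_span_singleton_self x)))
      · exact hTL (Submodule.mem_sup_right (Submodule.mem_span_singleton_self y))
    -- case split on whether K₂ is a point
    by_cases hw2 : ∀ x, sf K₂ x + sf K₂ (-x) = 0
    · -- K₂ is a singleton, so is K₁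
      obtain ⟨b, hb⟩ := hne₂
      have hK2 : K₂ = {b} := singleton_of_width_zero hc₂ hb hw2
      have hw1 : ∀ x, sf K₁ x + sf K₁ (-x) = 0 := by
        intro x
        obtain ⟨L, hL, hSL, hxL, _⟩ := pair_plane x x
        obtain ⟨lam, _, hrel⟩ := keyW L hL hSL
        rw [hrel x hxL, hw2 x, mul_zero]
      obtain ⟨a, ha⟩ := hne₁
      have hK1 : K₁ = {a} := singleton_of_width_zero hc₁ ha hw1
      refine ⟨a - b, 1, one_ne_zero, ?_⟩
      rw [hK1, hK2, Set.image_singleton, one_smul, sub_add_cancel]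
    · -- main case
      push_neg at hw2
      obtain ⟨u₀, hu₀⟩ := hw2
      have hu₀pos : 0 < sf K₂ u₀ + sf K₂ (-u₀) :=
        lt_of_le_of_ne (sf_width_nonneg hc₂ hne₂ u₀) (Ne.symm hu₀)
      set lam := (sf K₁ u₀ + sf K₁ (-u₀)) / (sf K₂ u₀ + sf K₂ (-u₀)) with hlamdef
      have hwglob : ∀ x, sf K₁ x + sf K₁ (-x) = lam * (sf K₂ x + sf K₂ (-x)) := by
        intro x
        obtain ⟨L, hL, hSL, hxL, hu₀L⟩ := pair_plane x u₀
        obtain ⟨l', hl', hrel⟩ := keyW L hL hSL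
        have h1 := hrel u₀ hu₀L
        have h2 := hrel x hxL
        have h3 : l' = lam := by
          rw [hlamdef, h1]
          field_simp
        rw [h2, h3]
      have hlampos : 0 < lam := by
        obtain ⟨L, hL, hSL, hxL, _⟩ := pair_plane u₀ u₀
        obtain ⟨l', hl', hrel⟩ := keyW L hL hSL
        have h1 := hrel u₀ hxL
        rw [hlamdef, h1]
        positivity
      -- the two odd functions
      set f : EuclideanSpace ℝ (Fin n) → ℝ := fun x => sf K₁ x - lam * sf K₂ x with hfdef
      set g : EuclideanSpace ℝ (Fin n) → ℝ := fun x => sf K₁ x - lam * sf K₂ (-x) with hgdef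
      have hfc : Continuous f := (sf_cont hc₁ hne₁).sub
        (continuous_const.mul (sf_cont hc₂ hne₂))
      have hgc : Continuous g := (sf_cont hc₁ hne₁).sub
        (continuous_const.mul ((sf_cont hc₂ hne₂).comp continuous_neg))
      have homf : ∀ (c : ℝ) (x : EuclideanSpace ℝ (Fin n)), f (c•x) = c * f x := by
        intro c x
        rcases le_or_gt 0 c with hc | hc
        · simp only [hfdef]
          rw [sf_smul hc₁ hne₁ hc, sf_smul hc₂ hne₂ hc]
          ring
        · have h1 : c • x = (-c) • (-x) := by rw [smul_neg, neg_smul, neg_neg]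
          have h2 := hwglob x
          simp only [hfdef]
          rw [h1, sf_smul hc₁ hne₁ (by linarith : (0:ℝ) ≤ -c),
            sf_smul hc₂ hne₂ (by linarith : (0:ℝ) ≤ -c)]
          nlinarith [h2]
      have homg : ∀ (c : ℝ) (x : EuclideanSpace ℝ (Fin n)), g (c•x) = c * g x := by
        intro c x
        rcases le_or_gt 0 c with hc | hc
        · simp only [hgdef]
          rw [sf_smul hc₁ hne₁ hc, ← smul_neg, sf_smul hc₂ hne₂ hc]
          ring
        · have h1 : c • x = (-c) • (-x) := by rw [smul_neg, neg_smul, neg_neg]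
          have h1' : -(c • x) = (-c) • x := by rw [neg_smul]
          have h2 := hwglob x
          simp only [hgdef]
          rw [h1', h1, sf_smul hc₁ hne₁ (by linarith : (0:ℝ) ≤ -c),
            sf_smul hc₂ hne₂ (by linarith : (0:ℝ) ≤ -c)]
          nlinarith [h2]
      -- the dichotomy
      have DH : ∀ x y : EuclideanSpace ℝ (Fin n),
          (∀ a b : ℝ, f (a•x + b•y) = a * f x + b * f y) ∨
          (∀ a b : ℝ, g (a•x + b•y) = a * g x + b * g y) := by
        intro x y
        obtain ⟨L, hL, hSL, hxL, hyL⟩ := pair_plane x y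
        by_cases hLw : ∀ w ∈ L, sf K₂ w + sf K₂ (-w) = 0
        · -- degenerate subspace: both support functions linear on L
          have hw1L : ∀ w ∈ L, sf K₁ w + sf K₁ (-w) = 0 := by
            intro w hw
            rw [hwglob w, hLw w hw, mul_zero]
          obtain ⟨z₁, hz₁⟩ := riesz_on (sf K₁) (sf_subadd hc₁ hne₁)
            (fun c hc x => sf_smul hc₁ hne₁ hc x) L hw1L
          obtain ⟨z₂, hz₂⟩ := riesz_on (sf K₂) (sf_subadd hc₂ hne₂)
            (fun c hc x => sf_smul hc₂ hne₂ hc x) L hLw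
          left
          have hfL : ∀ w ∈ L, f w = (@inner ℝ _ _ (z₁ - lam • z₂) w : ℝ) := by
            intro w hw
            simp only [hfdef]
            rw [hz₁ w hw, hz₂ w hw, inner_sub_left, real_inner_smul_left]
          intro a b
          have hmem : a•x + b•y ∈ L := L.add_mem (L.smul_mem a hxL) (L.smul_mem b hyL)
          rw [hfL _ hmem, hfL x hxL, hfL y hyL, inner_add_right,
            real_inner_smul_right, real_inner_smul_right]
        · -- non-degenerate: the ratio is lam
          push_neg at hLw
          obtain ⟨w₁, hw₁L, hwne⟩ := hLw
          obtain ⟨lam', hlam', z, hrel⟩ := key L hL hSL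
          have hlam'lam : lam' = lam := by
            have hW : ∀ v ∈ L, sf K₁ v + sf K₁ (-v) = lam' * (sf K₂ v + sf K₂ (-v)) := by
              intro v hv
              rcases hrel with h | h
              · have h1 := h v hv
                have h2 := h (-v) (L.neg_mem hv)
                rw [inner_neg_right] at h2
                linarith
              · have h1 := h v hv
                have h2 := h (-v) (L.neg_mem hv)
                rw [inner_neg_right, neg_neg] at h2
                linarith
            have h1 := hW w₁ hw₁L
            have h2 := hwglob w₁
            have h3 : (lam' - lam) * (sf K₂ w₁ + sf K₂ (-w₁)) = 0 := by linarith
            rcases mul_eq_zero.mp h3 with h | h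
            · linarith
            · exact absurd h hwne
          rw [hlam'lam] at hrel
          rcases hrel with hP | hN
          · left
            have hfL : ∀ w ∈ L, f w = (@inner ℝ _ _ z w : ℝ) := by
              intro w hw
              simp only [hfdef]
              rw [hP w hw]
              ring
            intro a b
            have hmem : a•x + b•y ∈ L := L.add_mem (L.smul_mem a hxL) (L.smul_mem b hyL)
            rw [hfL _ hmem, hfL x hxL, hfL y hyL, inner_add_right,
              real_inner_smul_right, real_inner_smul_right]
          · right
            have hgL : ∀ w ∈ L, g w = (@inner ℝ _ _ z w : ℝ) := by
              intro w hw
              simp only [hgdef]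
              rw [hN w hw]
              ring
            intro a b
            have hmem : a•x + b•y ∈ L := L.add_mem (L.smul_mem a hxL) (L.smul_mem b hyL)
            rw [hgL _ hmem, hgL x hxL, hgL y hyL, inner_add_right,
              real_inner_smul_right, real_inner_smul_right]
      -- image convexity/compactness helper
      have himg : ∀ (z : EuclideanSpace ℝ (Fin n)) (l : ℝ),
          IsCompact ((fun w => z + l • w) '' K₂) ∧ Convex ℝ ((fun w => z + l • w) '' K₂) ∧
            ((fun w => z + l • w) '' K₂).Nonempty := by
        intro z l
        refine ⟨hc₂.image (continuous_const.add (continuous_const_smul l)), ?_, hne₂.image _⟩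
        have h1 : (fun w : EuclideanSpace ℝ (Fin n) => z + l • w) '' K₂
            = (fun w : EuclideanSpace ℝ (Fin n) => z + w) '' (l • K₂) := by
          rw [← Set.image_smul, Set.image_image]
        rw [h1]
        exact (hcv₂.smul l).translate z
      -- apply the dichotomy theorem
      rcases dichotomy_global f g hfc hgc homf homg DH with hadd | hadd
      · -- f is linear
        let ψ : EuclideanSpace ℝ (Fin n) →ₗ[ℝ] ℝ :=
          { toFun := f
            map_add' := hadd
            map_smul' := fun c x => by simp only [homf, RingHom.id_apply, smul_eq_mul] }
        set z := (InnerProductSpace.toDual ℝ (EuclideanSpace ℝ (Fin n))).symm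
          (LinearMap.toContinuousLinearMap ψ) with hzdef
        have hz : ∀ x, f x = (@inner ℝ _ _ z x : ℝ) := by
          intro x
          rw [hzdef, InnerProductSpace.toDual_symm_apply]
          rfl
        refine ⟨z, lam, ne_of_gt hlampos, ?_⟩
        obtain ⟨hic, hicv, hine⟩ := himg z lam
        apply sf_set_eq hc₁ hcv₁ hne₁ hic hicv hine
        intro x
        rw [sf_image_pos hc₂ hne₂ z hlampos.le x]
        have h1 := hz x
        simp only [hfdef] at h1
        linarith
      · -- g is linear
        let ψ : EuclideanSpace ℝ (Fin n) →ₗ[ℝ] ℝ :=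
          { toFun := g
            map_add' := hadd
            map_smul' := fun c x => by simp only [homg, RingHom.id_apply, smul_eq_mul] }
        set z := (InnerProductSpace.toDual ℝ (EuclideanSpace ℝ (Fin n))).symm
          (LinearMap.toContinuousLinearMap ψ) with hzdef
        have hz : ∀ x, g x = (@inner ℝ _ _ z x : ℝ) := by
          intro x
          rw [hzdef, InnerProductSpace.toDual_symm_apply]
          rfl
        refine ⟨z, -lam, by simp [ne_of_gt hlampos], ?_⟩
        obtain ⟨hic, hicv, hine⟩ := himg z (-lam)
        apply sf_set_eq hc₁ hcv₁ hne₁ hic hicv hine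
        intro x
        rw [sf_image_neg hc₂ hne₂ z (by linarith : -lam ≤ 0) x, neg_neg]
        have h1 := hz x
        simp only [hgdef] at h1
        linarith
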